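/- arXiv:1710.04643 — 4 statements merged into one kernel-verified Lean document; each statement's English description precedes it below -/
import Mathlib

section
/- For jointly distributed finite random variables (X_l)_{l∈L} and X_0 satisfying the Markov chain X_S − X_0 − X_T for all disjoint S,T ⊆ L, the set function v(S) = I(X_S; X_0 | X_{S^c}) (where S^c = L\S) satisfies v(S) = H(X_L) − H(X_{S^c}) − H(X_S | X_0) for every S ⊆ L. -/
noncomputable section
open Finset
open scoped Classical BigOperators

/-- Probability of an event under a pmf on a finite sample space. -/
def Pr {Ω : Type} [Fintype Ω] (p : Ω → ℝ) (E : Ω → Prop) : ℝ :=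
  ∑ ω : Ω, if E ω then p ω else 0

/-- `p` is a probability mass function. -/
def IsPMF {Ω : Type} [Fintype Ω] (p : Ω → ℝ) : Prop :=
  (∀ ω, 0 ≤ p ω) ∧ (∑ ω : Ω, p ω) = 1

/-- Shannon entropy of a finitely-valued random variable `X` under pmf `p`. -/
def ent {Ω α : Type} [Fintype Ω] [Fintype α] (p : Ω → ℝ) (X : Ω → α) : ℝ :=
  -∑ a : α, Pr p (fun ω => X ω = a) * Real.log (Pr p (fun ω => X ω = a))

/-- Conditional Shannon entropy `H(X|Y)`. -/
def condEnt {Ω α β : Type} [Fintype Ω] [Fintype α] [Fintype β]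
    (p : Ω → ℝ) (X : Ω → α) (Y : Ω → β) : ℝ :=
  ent p (fun ω => (X ω, Y ω)) - ent p Y

/-- Mutual information `I(X;Y)`. -/
def mi {Ω α β : Type} [Fintype Ω] [Fintype α] [Fintype β]
    (p : Ω → ℝ) (X : Ω → α) (Y : Ω → β) : ℝ :=
  ent p X + ent p Y - ent p (fun ω => (X ω, Y ω))

/-- Conditional mutual information `I(X;Y|Z)`. -/
def cmi {Ω α β γ : Type} [Fintype Ω] [Fintype α] [Fintype β] [Fintype γ]
    (p : Ω → ℝ) (X : Ω → α) (Y : Ω → β) (Z : Ω → γ) : ℝ :=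
  ent p (fun ω => (X ω, Z ω)) + ent p (fun ω => (Y ω, Z ω))
    - ent p (fun ω => (X ω, Y ω, Z ω)) - ent p Z

/-- `X` and `Y` are conditionally independent given `Z` (Markov chain `X - Z - Y`). -/
def CondIndep {Ω α β γ : Type} [Fintype Ω] [Fintype α] [Fintype β] [Fintype γ]
    (p : Ω → ℝ) (X : Ω → α) (Y : Ω → β) (Z : Ω → γ) : Prop :=
  ∀ (a : α) (b : β) (c : γ),
    Pr p (fun ω => X ω = a ∧ Y ω = b ∧ Z ω = c) * Pr p (fun ω => Z ω = c)
      = Pr p (fun ω => X ω = a ∧ Z ω = c) * Pr p (fun ω => Y ω = b ∧ Z ω = c)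

/-- The tuple random variable `X_S = (X_l)_{l ∈ S}`. -/
def XS {Ω L 𝒳 : Type} [Fintype Ω] (X : L → Ω → 𝒳) (S : Finset L) :
    Ω → (S → 𝒳) :=
  fun ω i => X i ω

/-- The value function of the secret-key generation game:
`v(S) = I(X_S; X_0 | X_{L\S})`. -/
def vGame {Ω L 𝒳 β : Type} [Fintype Ω] [Fintype L] [DecidableEq L] [Fintype 𝒳] [Fintype β]
    (p : Ω → ℝ) (X : L → Ω → 𝒳) (X0 : Ω → β) (S : Finset L) : ℝ :=
  cmi p (XS X S) X0 (XS X Sᶜ)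


lemma Pr_congr {Ω : Type} [Fintype Ω] (p : Ω → ℝ) {E F : Ω → Prop}
    (h : ∀ ω, E ω ↔ F ω) : Pr p E = Pr p F := by
  unfold Pr; apply Finset.sum_congr rfl; intro ω _; simp [h ω]

lemma Pr_nonneg {Ω : Type} [Fintype Ω] {p : Ω → ℝ} (hp : ∀ ω, 0 ≤ p ω)
    (E : Ω → Prop) : 0 ≤ Pr p E := by
  unfold Pr; apply Finset.sum_nonneg; intro ω _
  by_cases h : E ω <;> simp [h, hp ω]

lemma Pr_mono {Ω : Type} [Fintype Ω] {p : Ω → ℝ} (hp : ∀ ω, 0 ≤ p ω)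
    {E F : Ω → Prop} (h : ∀ ω, E ω → F ω) : Pr p E ≤ Pr p F := by
  unfold Pr; apply Finset.sum_le_sum; intro ω _
  by_cases hE : E ω
  · simp [hE, h ω hE]
  · by_cases hF : F ω <;> simp [hE, hF, hp ω]

lemma Pr_false {Ω : Type} [Fintype Ω] (p : Ω → ℝ) {E : Ω → Prop}
    (h : ∀ ω, ¬ E ω) : Pr p E = 0 := by
  unfold Pr; apply Finset.sum_eq_zero; intro ω _; simp [h ω]

lemma Pr_sum_fiber {Ω β : Type} [Fintype Ω] [Fintype β] (p : Ω → ℝ)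
    (E : Ω → Prop) (Y : Ω → β) :
    ∑ b : β, Pr p (fun ω => E ω ∧ Y ω = b) = Pr p E := by
  unfold Pr
  rw [Finset.sum_comm]
  apply Finset.sum_congr rfl; intro ω _
  by_cases h : E ω <;> simp [h, Finset.sum_ite_eq, Finset.sum_ite_eq']

lemma ent_comp_inj {Ω α β : Type} [Fintype Ω] [Fintype α] [Fintype β]
    (p : Ω → ℝ) (X : Ω → α) (f : α → β) (hf : Function.Injective f) :
    ent p (fun ω => f (X ω)) = ent p X := by
  unfold ent
  congr 1
  have h1 : ∀ a : α, Pr p (fun ω => f (X ω) = f a) = Pr p (fun ω => X ω = a) :=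
    fun a => Pr_congr p (fun ω => by simp [hf.eq_iff])
  calc ∑ b : β, Pr p (fun ω => f (X ω) = b) * Real.log (Pr p (fun ω => f (X ω) = b))
      = ∑ b ∈ Finset.image f Finset.univ,
          Pr p (fun ω => f (X ω) = b) * Real.log (Pr p (fun ω => f (X ω) = b)) := by
        refine (Finset.sum_subset (Finset.subset_univ _) ?_).symm
        intro b _ hb
        have : Pr p (fun ω => f (X ω) = b) = 0 := by
          apply Pr_false; intro ω h
          exact hb (Finset.mem_image.2 ⟨X ω, Finset.mem_univ _, h⟩)
        simp [this]
    _ = ∑ a : α, Pr p (fun ω => f (X ω) = f a) * Real.log (Pr p (fun ω => f (X ω) = f a)) :=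
        Finset.sum_image (fun a _ b _ h => hf h)
    _ = ∑ a : α, Pr p (fun ω => X ω = a) * Real.log (Pr p (fun ω => X ω = a)) := by
        simp only [h1]

lemma sum_log_decomp {α β γ : Type} [Fintype α] [Fintype β] [Fintype γ]
    (q : α → β → γ → ℝ) (r : α → γ → ℝ) (s : β → γ → ℝ) (t : γ → ℝ)
    (hq0 : ∀ a b c, 0 ≤ q a b c) (hr0 : ∀ a c, 0 ≤ r a c) (hs0 : ∀ b c, 0 ≤ s b c)
    (hqt : ∀ a b c, q a b c ≤ t c)
    (hfac : ∀ a b c, q a b c * t c = r a c * s b c)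
    (hqr : ∀ a c, ∑ b : β, q a b c = r a c)
    (hqs : ∀ b c, ∑ a : α, q a b c = s b c)
    (hrt : ∀ c, ∑ a : α, r a c = t c) :
    ∑ a : α, ∑ b : β, ∑ c : γ, q a b c * Real.log (q a b c)
      = (∑ a : α, ∑ c : γ, r a c * Real.log (r a c))
        + (∑ b : β, ∑ c : γ, s b c * Real.log (s b c))
        - ∑ c : γ, t c * Real.log (t c) := by
  have key : ∀ a b c, q a b c * Real.log (q a b c)
      = q a b c * Real.log (r a c) + q a b c * Real.log (s b c)
        - q a b c * Real.log (t c) := by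
    intro a b c
    rcases eq_or_lt_of_le (hq0 a b c) with h0 | h0
    · rw [← h0]; ring
    · have ht0 : 0 < t c := lt_of_lt_of_le h0 (hqt a b c)
      have hrs : 0 < r a c * s b c := by rw [← hfac]; positivity
      have hr1 : 0 < r a c := lt_of_le_of_ne (hr0 a c)
        (by intro hrr; rw [← hrr] at hrs; simp at hrs)
      have hs1 : 0 < s b c := lt_of_le_of_ne (hs0 b c)
        (by intro hss; rw [← hss] at hrs; simp at hrs)
      have hqe : q a b c = r a c * s b c / t c := by
        field_simp; linarith [hfac a b c]
      rw [hqe, Real.log_div (by positivity) ht0.ne', Real.log_mul hr1.ne' hs1.ne']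
      ring
  have S1 : ∑ a : α, ∑ b : β, ∑ c : γ, q a b c * Real.log (r a c)
      = ∑ a : α, ∑ c : γ, r a c * Real.log (r a c) := by
    refine Finset.sum_congr rfl fun a _ => ?_
    rw [Finset.sum_comm]
    exact Finset.sum_congr rfl fun c _ => by rw [← Finset.sum_mul, hqr]
  have S2 : ∑ a : α, ∑ b : β, ∑ c : γ, q a b c * Real.log (s b c)
      = ∑ b : β, ∑ c : γ, s b c * Real.log (s b c) := by
    rw [Finset.sum_comm]
    refine Finset.sum_congr rfl fun b _ => ?_
    rw [Finset.sum_comm]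
    exact Finset.sum_congr rfl fun c _ => by rw [← Finset.sum_mul, hqs]
  have S3 : ∑ a : α, ∑ b : β, ∑ c : γ, q a b c * Real.log (t c)
      = ∑ c : γ, t c * Real.log (t c) := by
    have step : ∀ a : α, ∑ b : β, ∑ c : γ, q a b c * Real.log (t c)
        = ∑ c : γ, (∑ b : β, q a b c) * Real.log (t c) := by
      intro a
      rw [Finset.sum_comm]
      exact Finset.sum_congr rfl fun c _ => (Finset.sum_mul _ _ _).symm
    simp only [step, hqr]
    rw [Finset.sum_comm]
    exact Finset.sum_congr rfl fun c _ => by rw [← Finset.sum_mul, hrt]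
  rw [← S1, ← S2, ← S3]
  simp only [key, Finset.sum_add_distrib, Finset.sum_sub_distrib]

lemma ent_condIndep {Ω α β γ : Type} [Fintype Ω] [Fintype α] [Fintype β] [Fintype γ]
    (p : Ω → ℝ) (hp : IsPMF p) (X : Ω → α) (Y : Ω → β) (Z : Ω → γ)
    (h : CondIndep p X Y Z) :
    ent p (fun ω => (X ω, Y ω, Z ω))
      = ent p (fun ω => (X ω, Z ω)) + ent p (fun ω => (Y ω, Z ω)) - ent p Z := by
  have main := sum_log_decomp
    (fun a b c => Pr p (fun ω => X ω = a ∧ Y ω = b ∧ Z ω = c))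
    (fun a c => Pr p (fun ω => X ω = a ∧ Z ω = c))
    (fun b c => Pr p (fun ω => Y ω = b ∧ Z ω = c))
    (fun c => Pr p (fun ω => Z ω = c))
    (fun a b c => Pr_nonneg hp.1 _) (fun a c => Pr_nonneg hp.1 _)
    (fun b c => Pr_nonneg hp.1 _)
    (fun a b c => Pr_mono hp.1 (fun ω hw => hw.2.2))
    (fun a b c => h a b c)
    (fun a c => by
      rw [← Pr_sum_fiber p (fun ω => X ω = a ∧ Z ω = c) Y]
      exact Finset.sum_congr rfl fun b _ => Pr_congr p (fun ω => by tauto))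
    (fun b c => by
      rw [← Pr_sum_fiber p (fun ω => Y ω = b ∧ Z ω = c) X]
      exact Finset.sum_congr rfl fun a _ => Pr_congr p (fun ω => by tauto))
    (fun c => by
      rw [← Pr_sum_fiber p (fun ω => Z ω = c) X]
      exact Finset.sum_congr rfl fun a _ => Pr_congr p (fun ω => by tauto))
  have E3 : ent p (fun ω => (X ω, Y ω, Z ω))
      = -∑ a : α, ∑ b : β, ∑ c : γ,
          Pr p (fun ω => X ω = a ∧ Y ω = b ∧ Z ω = c)
            * Real.log (Pr p (fun ω => X ω = a ∧ Y ω = b ∧ Z ω = c)) := by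
    unfold ent
    rw [Fintype.sum_prod_type]
    congr 1
    refine Finset.sum_congr rfl fun a _ => ?_
    rw [Fintype.sum_prod_type]
    refine Finset.sum_congr rfl fun b _ => Finset.sum_congr rfl fun c _ => ?_
    rw [Pr_congr p (F := fun ω => X ω = a ∧ Y ω = b ∧ Z ω = c)
      (fun ω => by simp [Prod.ext_iff])]
  have EXZ : ent p (fun ω => (X ω, Z ω))
      = -∑ a : α, ∑ c : γ, Pr p (fun ω => X ω = a ∧ Z ω = c)
          * Real.log (Pr p (fun ω => X ω = a ∧ Z ω = c)) := by
    unfold ent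
    rw [Fintype.sum_prod_type]
    refine congrArg Neg.neg (Finset.sum_congr rfl fun a _ =>
      Finset.sum_congr rfl fun c _ => ?_)
    rw [Pr_congr p (F := fun ω => X ω = a ∧ Z ω = c) (fun ω => by simp [Prod.ext_iff])]
  have EYZ : ent p (fun ω => (Y ω, Z ω))
      = -∑ b : β, ∑ c : γ, Pr p (fun ω => Y ω = b ∧ Z ω = c)
          * Real.log (Pr p (fun ω => Y ω = b ∧ Z ω = c)) := by
    unfold ent
    rw [Fintype.sum_prod_type]
    refine congrArg Neg.neg (Finset.sum_congr rfl fun b _ =>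
      Finset.sum_congr rfl fun c _ => ?_)
    rw [Pr_congr p (F := fun ω => Y ω = b ∧ Z ω = c) (fun ω => by simp [Prod.ext_iff])]
  have EZ : ent p Z = -∑ c : γ, Pr p (fun ω => Z ω = c)
      * Real.log (Pr p (fun ω => Z ω = c)) := rfl
  rw [E3, EXZ, EYZ, EZ, main]
  ring

/-- under the Markov chain assumption,
`v(S) = I(X_S; X_0 | X_{S^c}) = H(X_L) - H(X_{S^c}) - H(X_S | X_0)`. -/
theorem statement0 {Ω L 𝒳 β : Type} [Fintype Ω] [Fintype L] [DecidableEq L] [Fintype 𝒳] [Fintype β]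
    (p : Ω → ℝ) (hp : IsPMF p) (X : L → Ω → 𝒳) (X0 : Ω → β)
    (hM : ∀ S T : Finset L, Disjoint S T → CondIndep p (XS X S) (XS X T) X0)
    (S : Finset L) :
    vGame p X X0 S
      = ent p (XS X (Finset.univ : Finset L)) - ent p (XS X Sᶜ) - condEnt p (XS X S) X0 := by
  have hCI : CondIndep p (XS X S) (XS X Sᶜ) X0 := hM S Sᶜ disjoint_compl_right
  have hB := ent_condIndep p hp (XS X S) (XS X Sᶜ) X0 hCI
  -- e1 : H(X_S, X_{S^c}) = H(X_L)
  have e1 : ent p (fun ω => (XS X S ω, XS X Sᶜ ω))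
      = ent p (XS X (Finset.univ : Finset L)) := by
    have hf : Function.Injective
        (fun g : ↥(Finset.univ : Finset L) → 𝒳 =>
          ((fun i => g ⟨i.1, Finset.mem_univ _⟩ : ↥S → 𝒳),
           (fun i => g ⟨i.1, Finset.mem_univ _⟩ : ↥Sᶜ → 𝒳))) := by
      intro g g' hgg
      funext i
      have hi2 : (⟨i.1, Finset.mem_univ _⟩ : { x // x ∈ (Finset.univ : Finset L) }) = i :=
        Subtype.ext rfl
      by_cases hi : i.1 ∈ S
      · have := congrFun (congrArg Prod.fst hgg) ⟨i.1, hi⟩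
        simpa [hi2] using this
      · have := congrFun (congrArg Prod.snd hgg) ⟨i.1, Finset.mem_compl.2 hi⟩
        simpa [hi2] using this
    exact ent_comp_inj p (XS X (Finset.univ : Finset L))
      (fun g => ((fun i => g ⟨i.1, Finset.mem_univ _⟩ : ↥S → 𝒳),
        (fun i => g ⟨i.1, Finset.mem_univ _⟩ : ↥Sᶜ → 𝒳))) hf
  -- e2 : swap
  have e2 : ent p (fun ω => (X0 ω, XS X Sᶜ ω))
      = ent p (fun ω => (XS X Sᶜ ω, X0 ω)) :=
    ent_comp_inj p (fun ω => (XS X Sᶜ ω, X0 ω)) Prod.swap Prod.swap_injective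
  -- e3 : reorder triple
  have e3 : ent p (fun ω => (XS X S ω, X0 ω, XS X Sᶜ ω))
      = ent p (fun ω => (XS X S ω, XS X Sᶜ ω, X0 ω)) := by
    have hf : Function.Injective
        (fun x : (↥S → 𝒳) × (↥Sᶜ → 𝒳) × β =>
          (x.1, x.2.2, x.2.1)) := by
      rintro ⟨a, b, c⟩ ⟨a', b', c'⟩ hxy
      simp only [Prod.ext_iff] at hxy ⊢
      tauto
    exact ent_comp_inj p (fun ω => (XS X S ω, XS X Sᶜ ω, X0 ω))
      (fun x => (x.1, x.2.2, x.2.1)) hf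
  unfold vGame cmi condEnt
  rw [e2]
  rw [show (fun ω => (XS X S ω, X0 ω, XS X Sᶜ ω))
      = (fun ω => (XS X S ω, X0 ω, XS X Sᶜ ω)) from rfl]
  linarith [e1, e3, hB]
end
end

section
/- Under the Markov assumption that X_S − X_0 − X_T for all disjoint S,T ⊆ L, the value function v(S) = I(X_S; X_0 | X_{L\S}) is superadditive: for all disjoint S,T ⊆ L, v(S) + v(T) ≤ v(S ∪ T). -/
noncomputable section
open Finset
open scoped Classical BigOperators

namespace SKAux

variable {Ω α β γ δ : Type} [Fintype Ω] [Fintype α] [Fintype β] [Fintype γ] [Fintype δ]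

lemma Pr_congr {p : Ω → ℝ} {E F : Ω → Prop} (h : ∀ ω, E ω ↔ F ω) : Pr p E = Pr p F := by
  unfold Pr
  exact Finset.sum_congr rfl fun ω _ => by simp only [h ω]

lemma Pr_nonneg {p : Ω → ℝ} (hp : ∀ ω, 0 ≤ p ω) (E : Ω → Prop) : 0 ≤ Pr p E := by
  unfold Pr
  refine Finset.sum_nonneg fun ω _ => ?_
  split <;> simp [hp ω]

lemma Pr_mono {p : Ω → ℝ} (hp : ∀ ω, 0 ≤ p ω) {E F : Ω → Prop} (h : ∀ ω, E ω → F ω) :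
    Pr p E ≤ Pr p F := by
  unfold Pr
  refine Finset.sum_le_sum fun ω _ => ?_
  by_cases hE : E ω
  · rw [if_pos hE, if_pos (h ω hE)]
  · rw [if_neg hE]
    split <;> simp [hp ω]

lemma le_Pr {p : Ω → ℝ} (hp : ∀ ω, 0 ≤ p ω) {E : Ω → Prop} {ω₀ : Ω} (h : E ω₀) :
    p ω₀ ≤ Pr p E := by
  unfold Pr
  have := Finset.single_le_sum (f := fun ω => if E ω then p ω else 0)
    (fun ω _ => by by_cases hE : E ω <;> simp [hE, hp ω]) (Finset.mem_univ ω₀)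
  simpa [h] using this

lemma sum_Pr_fst {p : Ω → ℝ} (X : Ω → α) (E : Ω → Prop) :
    ∑ a : α, Pr p (fun ω => X ω = a ∧ E ω) = Pr p E := by
  unfold Pr
  rw [Finset.sum_comm]
  refine Finset.sum_congr rfl fun ω _ => ?_
  by_cases hE : E ω
  · simp [hE, Finset.sum_ite_eq]
  · simp [hE]

lemma sum_Pr_eq_one {p : Ω → ℝ} (hp : IsPMF p) (X : Ω → α) :
    ∑ a : α, Pr p (fun ω => X ω = a) = 1 := by
  have := sum_Pr_fst (p := p) X (fun _ => True)
  simp only [and_true] at this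
  rw [this]
  unfold Pr
  simpa using hp.2

lemma groupRep (p : Ω → ℝ) (f : δ → ℝ) (W : Ω → δ) :
    ∑ ω, p ω * f (W ω) = ∑ d, Pr p (fun ω => W ω = d) * f d := by
  unfold Pr
  symm
  calc ∑ d, (∑ ω, if W ω = d then p ω else 0) * f d
      = ∑ d, ∑ ω, (if W ω = d then p ω * f d else 0) := by
        refine Finset.sum_congr rfl fun d _ => ?_
        rw [Finset.sum_mul]
        exact Finset.sum_congr rfl fun ω _ => by split <;> simp
    _ = ∑ ω, ∑ d, (if W ω = d then p ω * f d else 0) := Finset.sum_comm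
    _ = ∑ ω, p ω * f (W ω) := by
        refine Finset.sum_congr rfl fun ω _ => ?_
        simp

lemma entRep (p : Ω → ℝ) (W : Ω → δ) :
    ent p W = -∑ ω, p ω * Real.log (Pr p fun ω' => W ω' = W ω) := by
  unfold ent
  rw [groupRep p (fun d => Real.log (Pr p fun ω' => W ω' = d)) W]

lemma cmiRep (p : Ω → ℝ) (X : Ω → α) (Y : Ω → β) (Z : Ω → γ) :
    cmi p X Y Z = ∑ ω, p ω *
      (Real.log (Pr p fun ω' => X ω' = X ω ∧ Y ω' = Y ω ∧ Z ω' = Z ω)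
       + Real.log (Pr p fun ω' => Z ω' = Z ω)
       - Real.log (Pr p fun ω' => X ω' = X ω ∧ Z ω' = Z ω)
       - Real.log (Pr p fun ω' => Y ω' = Y ω ∧ Z ω' = Z ω)) := by
  unfold cmi
  rw [entRep p (fun ω => (X ω, Z ω)), entRep p (fun ω => (Y ω, Z ω)),
      entRep p (fun ω => (X ω, Y ω, Z ω)), entRep p Z]
  have hcomb : ∀ (A B C D : Ω → ℝ),
      (-∑ ω, A ω) + (-∑ ω, B ω) - (-∑ ω, C ω) - (-∑ ω, D ω)
        = ∑ ω, (C ω + D ω - A ω - B ω) := by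
    intro A B C D
    rw [Finset.sum_sub_distrib, Finset.sum_sub_distrib, Finset.sum_add_distrib]
    ring
  rw [hcomb]
  refine Finset.sum_congr rfl fun ω _ => ?_
  have e1 : Pr p (fun ω' => (X ω', Y ω', Z ω') = (X ω, Y ω, Z ω))
      = Pr p (fun ω' => X ω' = X ω ∧ Y ω' = Y ω ∧ Z ω' = Z ω) :=
    Pr_congr fun ω' => by simp [Prod.ext_iff]
  have e2 : Pr p (fun ω' => (X ω', Z ω') = (X ω, Z ω))
      = Pr p (fun ω' => X ω' = X ω ∧ Z ω' = Z ω) :=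
    Pr_congr fun ω' => by simp [Prod.ext_iff]
  have e3 : Pr p (fun ω' => (Y ω', Z ω') = (Y ω, Z ω))
      = Pr p (fun ω' => Y ω' = Y ω ∧ Z ω' = Z ω) :=
    Pr_congr fun ω' => by simp [Prod.ext_iff]
  rw [e1, e2, e3]
  ring

lemma log_aux {q A B C D : ℝ} (hq : 0 ≤ q) (hqA : q ≤ A) (hAB : A ≤ B)
    (hAC : A ≤ C) (hAD : A ≤ D) :
    q - q * (C * D / (A * B)) ≤ q * (Real.log A + Real.log B - Real.log C - Real.log D) := by
  rcases hq.eq_or_lt with h0 | h0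
  · rw [← h0]; ring_nf; simp
  · have hA : 0 < A := lt_of_lt_of_le h0 hqA
    have hB : 0 < B := lt_of_lt_of_le hA hAB
    have hC : 0 < C := lt_of_lt_of_le hA hAC
    have hD : 0 < D := lt_of_lt_of_le hA hAD
    have hr : 0 < C * D / (A * B) := by positivity
    have hlog : Real.log (C * D / (A * B)) ≤ C * D / (A * B) - 1 :=
      Real.log_le_sub_one_of_pos hr
    have hexp : Real.log (C * D / (A * B))
        = Real.log C + Real.log D - (Real.log A + Real.log B) := by
      rw [Real.log_div (by positivity) (by positivity),
          Real.log_mul hC.ne' hD.ne', Real.log_mul hA.ne' hB.ne']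
    rw [hexp] at hlog
    nlinarith [hlog, h0.le]

lemma mul_div_mul_le {q n d : ℝ} (hn : 0 ≤ n) (hd : 0 ≤ d) (hq : 0 ≤ q) :
    q * (n / (q * d)) ≤ n / d := by
  rcases hq.eq_or_lt with h0 | h0
  · rw [← h0]; simpa using div_nonneg hn hd
  · rcases hd.eq_or_lt with hd0 | hd0
    · rw [← hd0]; simp
    · have : q * (n / (q * d)) = n / d := by
        field_simp
      rw [this]

set_option maxHeartbeats 1000000 in
lemma cmi_nonneg (p : Ω → ℝ) (hp : IsPMF p) (X : Ω → α) (Y : Ω → β) (Z : Ω → γ) :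
    0 ≤ cmi p X Y Z := by
  obtain ⟨hp0, hp1⟩ := hp
  rw [cmiRep]
  have step1 : ∑ ω, (p ω - p ω *
        ((Pr p fun ω' => X ω' = X ω ∧ Z ω' = Z ω) * (Pr p fun ω' => Y ω' = Y ω ∧ Z ω' = Z ω)
          / ((Pr p fun ω' => X ω' = X ω ∧ Y ω' = Y ω ∧ Z ω' = Z ω)
              * (Pr p fun ω' => Z ω' = Z ω))))
      ≤ ∑ ω, p ω *
        (Real.log (Pr p fun ω' => X ω' = X ω ∧ Y ω' = Y ω ∧ Z ω' = Z ω)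
         + Real.log (Pr p fun ω' => Z ω' = Z ω)
         - Real.log (Pr p fun ω' => X ω' = X ω ∧ Z ω' = Z ω)
         - Real.log (Pr p fun ω' => Y ω' = Y ω ∧ Z ω' = Z ω)) := by
    refine Finset.sum_le_sum fun ω _ => ?_
    refine log_aux (hp0 ω) (le_Pr hp0 ⟨rfl, rfl, rfl⟩)
      (Pr_mono hp0 fun ω' h => h.2.2)
      (Pr_mono hp0 fun ω' h => ⟨h.1, h.2.2⟩)
      (Pr_mono hp0 fun ω' h => ⟨h.2.1, h.2.2⟩)
  refine le_trans ?_ step1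
  rw [Finset.sum_sub_distrib, hp1]
  have step2 : ∑ ω, p ω *
        ((Pr p fun ω' => X ω' = X ω ∧ Z ω' = Z ω) * (Pr p fun ω' => Y ω' = Y ω ∧ Z ω' = Z ω)
          / ((Pr p fun ω' => X ω' = X ω ∧ Y ω' = Y ω ∧ Z ω' = Z ω)
              * (Pr p fun ω' => Z ω' = Z ω))) ≤ 1 := by
    have hgrp := groupRep (p := p)
      (f := fun v : γ × α × β =>
        (Pr p fun ω' => X ω' = v.2.1 ∧ Z ω' = v.1) * (Pr p fun ω' => Y ω' = v.2.2 ∧ Z ω' = v.1)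
          / ((Pr p fun ω' => X ω' = v.2.1 ∧ Y ω' = v.2.2 ∧ Z ω' = v.1)
              * (Pr p fun ω' => Z ω' = v.1)))
      (W := fun ω => (Z ω, X ω, Y ω))
    dsimp only at hgrp
    rw [hgrp]
    have hW : ∀ v : γ × α × β, Pr p (fun ω => (Z ω, X ω, Y ω) = v)
        = Pr p (fun ω => X ω = v.2.1 ∧ Y ω = v.2.2 ∧ Z ω = v.1) :=
      fun v => Pr_congr fun ω => by
        simp only [Prod.ext_iff]; tauto
    calc ∑ v : γ × α × β, Pr p (fun ω => (Z ω, X ω, Y ω) = v) *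
            ((Pr p fun ω' => X ω' = v.2.1 ∧ Z ω' = v.1) * (Pr p fun ω' => Y ω' = v.2.2 ∧ Z ω' = v.1)
              / ((Pr p fun ω' => X ω' = v.2.1 ∧ Y ω' = v.2.2 ∧ Z ω' = v.1)
                  * (Pr p fun ω' => Z ω' = v.1)))
        ≤ ∑ v : γ × α × β,
            (Pr p fun ω' => X ω' = v.2.1 ∧ Z ω' = v.1) * (Pr p fun ω' => Y ω' = v.2.2 ∧ Z ω' = v.1)
              / (Pr p fun ω' => Z ω' = v.1) := by
          refine Finset.sum_le_sum fun v _ => ?_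
          rw [hW v]
          exact mul_div_mul_le
            (mul_nonneg (Pr_nonneg hp0 _) (Pr_nonneg hp0 _)) (Pr_nonneg hp0 _) (Pr_nonneg hp0 _)
      _ ≤ 1 := by
          rw [Fintype.sum_prod_type]
          have hc : ∀ c : γ, (∑ v : α × β,
              (Pr p fun ω' => X ω' = v.1 ∧ Z ω' = c) * (Pr p fun ω' => Y ω' = v.2 ∧ Z ω' = c)
                / (Pr p fun ω' => Z ω' = c)) ≤ Pr p (fun ω' => Z ω' = c) := by
            intro c
            have : ∑ v : α × β,
                (Pr p fun ω' => X ω' = v.1 ∧ Z ω' = c) * (Pr p fun ω' => Y ω' = v.2 ∧ Z ω' = c)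
                  / (Pr p fun ω' => Z ω' = c)
                = (Pr p fun ω' => Z ω' = c) *
                    ((Pr p fun ω' => Z ω' = c) / (Pr p fun ω' => Z ω' = c)) := by
              rw [Fintype.sum_prod_type]
              have inner : ∀ a : α, (∑ b : β,
                  (Pr p fun ω' => X ω' = a ∧ Z ω' = c) * (Pr p fun ω' => Y ω' = b ∧ Z ω' = c)
                    / (Pr p fun ω' => Z ω' = c))
                  = (Pr p fun ω' => X ω' = a ∧ Z ω' = c) *
                      ((Pr p fun ω' => Z ω' = c) / (Pr p fun ω' => Z ω' = c)) := by
                intro a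
                rw [← sum_Pr_fst (p := p) Y (fun ω' => Z ω' = c), Finset.sum_div,
                    Finset.mul_sum]
                exact Finset.sum_congr rfl fun b _ => by rw [mul_div_assoc]
              rw [Finset.sum_congr rfl fun a _ => inner a, ← Finset.sum_mul,
                  sum_Pr_fst (p := p) X (fun ω' => Z ω' = c)]
            rw [this]
            rcases eq_or_ne (Pr p fun ω' => Z ω' = c) 0 with h0 | h0
            · simp [h0]
            · rw [div_self h0, mul_one]
          calc ∑ c : γ, ∑ v : α × β,
                (Pr p fun ω' => X ω' = v.1 ∧ Z ω' = c) * (Pr p fun ω' => Y ω' = v.2 ∧ Z ω' = c)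
                  / (Pr p fun ω' => Z ω' = c)
              ≤ ∑ c : γ, Pr p (fun ω' => Z ω' = c) := Finset.sum_le_sum fun c _ => hc c
            _ = 1 := sum_Pr_eq_one ⟨hp0, hp1⟩ Z
  linarith

lemma cmi_eq_zero (p : Ω → ℝ) (hp : IsPMF p) {X : Ω → α} {Y : Ω → β} {Z : Ω → γ}
    (h : CondIndep p X Y Z) : cmi p X Y Z = 0 := by
  obtain ⟨hp0, _⟩ := hp
  rw [cmiRep]
  refine Finset.sum_eq_zero fun ω _ => ?_
  rcases (hp0 ω).eq_or_lt with h0 | h0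
  · rw [← h0, zero_mul]
  · have hA : 0 < Pr p (fun ω' => X ω' = X ω ∧ Y ω' = Y ω ∧ Z ω' = Z ω) :=
      lt_of_lt_of_le h0 (le_Pr hp0 ⟨rfl, rfl, rfl⟩)
    have hB : 0 < Pr p (fun ω' => Z ω' = Z ω) :=
      lt_of_lt_of_le hA (Pr_mono hp0 fun ω' h' => h'.2.2)
    have hC : 0 < Pr p (fun ω' => X ω' = X ω ∧ Z ω' = Z ω) :=
      lt_of_lt_of_le hA (Pr_mono hp0 fun ω' h' => ⟨h'.1, h'.2.2⟩)
    have hD : 0 < Pr p (fun ω' => Y ω' = Y ω ∧ Z ω' = Z ω) :=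
      lt_of_lt_of_le hA (Pr_mono hp0 fun ω' h' => ⟨h'.2.1, h'.2.2⟩)
    have hci := h (X ω) (Y ω) (Z ω)
    have hlog : Real.log (Pr p (fun ω' => X ω' = X ω ∧ Y ω' = Y ω ∧ Z ω' = Z ω)
          * Pr p (fun ω' => Z ω' = Z ω))
        = Real.log (Pr p (fun ω' => X ω' = X ω ∧ Z ω' = Z ω)
          * Pr p (fun ω' => Y ω' = Y ω ∧ Z ω' = Z ω)) := by
      rw [hci]
    rw [Real.log_mul hA.ne' hB.ne', Real.log_mul hC.ne' hD.ne'] at hlog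
    have : Real.log (Pr p fun ω' => X ω' = X ω ∧ Y ω' = Y ω ∧ Z ω' = Z ω)
        + Real.log (Pr p fun ω' => Z ω' = Z ω)
        - Real.log (Pr p fun ω' => X ω' = X ω ∧ Z ω' = Z ω)
        - Real.log (Pr p fun ω' => Y ω' = Y ω ∧ Z ω' = Z ω) = 0 := by linarith
    rw [this, mul_zero]

variable {α' β' γ' : Type} [Fintype α'] [Fintype β'] [Fintype γ']

lemma cmi_congr (p : Ω → ℝ) {X : Ω → α} {X' : Ω → α'} {Y : Ω → β} {Y' : Ω → β'}
    {Z : Ω → γ} {Z' : Ω → γ'}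
    (hX : ∀ ω ω', X ω' = X ω ↔ X' ω' = X' ω)
    (hY : ∀ ω ω', Y ω' = Y ω ↔ Y' ω' = Y' ω)
    (hZ : ∀ ω ω', Z ω' = Z ω ↔ Z' ω' = Z' ω) :
    cmi p X Y Z = cmi p X' Y' Z' := by
  rw [cmiRep, cmiRep]
  refine Finset.sum_congr rfl fun ω _ => ?_
  rw [Pr_congr (fun ω' => and_congr (hX ω ω') (and_congr (hY ω ω') (hZ ω ω'))),
      Pr_congr (fun ω' => hZ ω ω'),
      Pr_congr (fun ω' => and_congr (hX ω ω') (hZ ω ω')),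
      Pr_congr (fun ω' => and_congr (hY ω ω') (hZ ω ω'))]

lemma cmi_comm (p : Ω → ℝ) (X : Ω → α) (Y : Ω → β) (Z : Ω → γ) :
    cmi p X Y Z = cmi p Y X Z := by
  rw [cmiRep, cmiRep]
  refine Finset.sum_congr rfl fun ω _ => ?_
  rw [Pr_congr (E := fun ω' => X ω' = X ω ∧ Y ω' = Y ω ∧ Z ω' = Z ω)
      (F := fun ω' => Y ω' = Y ω ∧ X ω' = X ω ∧ Z ω' = Z ω) (fun ω' => by tauto)]
  ring

lemma cmi_chain (p : Ω → ℝ) (X : Ω → α) (Y : Ω → β) (W : Ω → δ) (Z : Ω → γ) :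
    cmi p X (fun ω => (Y ω, W ω)) Z
      = cmi p X W Z + cmi p X Y (fun ω => (W ω, Z ω)) := by
  rw [cmiRep, cmiRep, cmiRep, ← Finset.sum_add_distrib]
  refine Finset.sum_congr rfl fun ω _ => ?_
  have e1 : Pr p (fun ω' => X ω' = X ω ∧ (Y ω', W ω') = (Y ω, W ω) ∧ Z ω' = Z ω)
      = Pr p (fun ω' => X ω' = X ω ∧ Y ω' = Y ω ∧ W ω' = W ω ∧ Z ω' = Z ω) :=
    Pr_congr fun ω' => by simp [Prod.ext_iff]; tauto
  have e2 : Pr p (fun ω' => (Y ω', W ω') = (Y ω, W ω) ∧ Z ω' = Z ω)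
      = Pr p (fun ω' => Y ω' = Y ω ∧ W ω' = W ω ∧ Z ω' = Z ω) :=
    Pr_congr fun ω' => by simp [Prod.ext_iff]; tauto
  have e3 : Pr p (fun ω' => X ω' = X ω ∧ Y ω' = Y ω ∧ (W ω', Z ω') = (W ω, Z ω))
      = Pr p (fun ω' => X ω' = X ω ∧ Y ω' = Y ω ∧ W ω' = W ω ∧ Z ω' = Z ω) :=
    Pr_congr fun ω' => by simp [Prod.ext_iff]
  have e4 : Pr p (fun ω' => (W ω', Z ω') = (W ω, Z ω))
      = Pr p (fun ω' => W ω' = W ω ∧ Z ω' = Z ω) :=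
    Pr_congr fun ω' => by simp [Prod.ext_iff]
  have e5 : Pr p (fun ω' => X ω' = X ω ∧ (W ω', Z ω') = (W ω, Z ω))
      = Pr p (fun ω' => X ω' = X ω ∧ W ω' = W ω ∧ Z ω' = Z ω) :=
    Pr_congr fun ω' => by simp [Prod.ext_iff]
  have e6 : Pr p (fun ω' => Y ω' = Y ω ∧ (W ω', Z ω') = (W ω, Z ω))
      = Pr p (fun ω' => Y ω' = Y ω ∧ W ω' = W ω ∧ Z ω' = Z ω) :=
    Pr_congr fun ω' => by simp [Prod.ext_iff]
  rw [e1, e2, e3, e4, e5, e6]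
  ring

end SKAux

set_option linter.unusedSectionVars false

section XSfacts

variable {Ω L 𝒳 : Type} [Fintype Ω] [DecidableEq L] (X : L → Ω → 𝒳)

lemma XS_eq_iff (S : Finset L) (ω ω' : Ω) :
    XS X S ω' = XS X S ω ↔ ∀ i ∈ S, X i ω' = X i ω := by
  simp [XS, funext_iff, Subtype.forall]

lemma XS_pattern {P Q R : Finset L} (hP : P = Q ∪ R) :
    ∀ ω ω' : Ω, XS X P ω' = XS X P ω
      ↔ (XS X Q ω', XS X R ω') = (XS X Q ω, XS X R ω) := by
  intro ω ω'
  simp only [XS_eq_iff, Prod.ext_iff, hP, Finset.mem_union]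
  constructor
  · intro h
    exact ⟨fun i hi => h i (Or.inl hi), fun i hi => h i (Or.inr hi)⟩
  · rintro ⟨h1, h2⟩ i (hi | hi)
    exacts [h1 i hi, h2 i hi]

end XSfacts

open SKAux

/-- the value function `v(S) = I(X_S; X_0 | X_{L\S})` is superadditive. -/
theorem statement1 {Ω L 𝒳 β : Type} [Fintype Ω] [Fintype L] [DecidableEq L] [Fintype 𝒳] [Fintype β]
    (p : Ω → ℝ) (hp : IsPMF p) (X : L → Ω → 𝒳) (X0 : Ω → β)
    (hM : ∀ S T : Finset L, Disjoint S T → CondIndep p (XS X S) (XS X T) X0) :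
    ∀ S T : Finset L, Disjoint S T →
      vGame p X X0 S + vGame p X X0 T ≤ vGame p X X0 (S ∪ T) := by
  intro S T hST
  have hSc : Sᶜ = T ∪ (S ∪ T)ᶜ := by
    ext i
    simp only [Finset.mem_compl, Finset.mem_union, not_or]
    have hd : i ∈ T → i ∉ S := fun hi => Finset.disjoint_right.mp hST hi
    tauto
  have hTc : Tᶜ = S ∪ (S ∪ T)ᶜ := by
    ext i
    simp only [Finset.mem_compl, Finset.mem_union, not_or]
    have hd : i ∈ S → i ∉ T := fun hi => Finset.disjoint_left.mp hST hi
    tauto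
  set A := XS X S with hA
  set B := XS X T with hB
  set C := XS X (S ∪ T)ᶜ with hC
  have rfl' : ∀ {κ : Type} (V : Ω → κ) (ω ω' : Ω), V ω' = V ω ↔ V ω' = V ω :=
    fun V ω ω' => Iff.rfl
  have pG := XS_pattern X (rfl : S ∪ T = S ∪ T)
  have pS := XS_pattern X hSc
  have pT := XS_pattern X hTc
  -- Step 1 : vGame (S ∪ T) = cmi p X0 B C + vGame S
  have h1 : vGame p X X0 (S ∪ T) = cmi p X0 B C + vGame p X X0 S := by
    unfold vGame
    rw [cmi_comm p (XS X (S ∪ T)) X0 (XS X (S ∪ T)ᶜ)]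
    rw [cmi_congr p (rfl' X0) pG (rfl' (XS X (S ∪ T)ᶜ))]
    rw [cmi_chain p X0 A B C]
    rw [cmi_congr p (rfl' X0) (rfl' A) (fun ω ω' => (pS ω ω').symm)]
    rw [cmi_comm p X0 A (XS X Sᶜ)]
  -- Step 2 : vGame T = cmi p B X0 (pair A C)
  have h2 : vGame p X X0 T = cmi p B X0 (fun ω => (A ω, C ω)) := by
    unfold vGame
    rw [cmi_congr p (rfl' B) (rfl' X0) pT]
  -- chain identities
  have hi : cmi p B (fun ω => (X0 ω, A ω)) C
      = cmi p B A C + cmi p B X0 (fun ω => (A ω, C ω)) := cmi_chain p B X0 A C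
  have hii : cmi p B (fun ω => (A ω, X0 ω)) C
      = cmi p B X0 C + cmi p B A (fun ω => (X0 ω, C ω)) := cmi_chain p B A X0 C
  have hiii : cmi p B (fun ω => (X0 ω, A ω)) C = cmi p B (fun ω => (A ω, X0 ω)) C := by
    refine cmi_congr p (rfl' B) ?_ (rfl' C)
    intro ω ω'
    simp only [Prod.ext_iff]
    exact and_comm
  have hiv : cmi p B (fun ω => (A ω, C ω)) X0
      = cmi p B C X0 + cmi p B A (fun ω => (C ω, X0 ω)) := cmi_chain p B A C X0
  have hv : cmi p B (fun ω => (A ω, C ω)) X0 = 0 := by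
    rw [cmi_congr p (rfl' B) (fun ω ω' => (pT ω ω').symm) (rfl' X0)]
    exact cmi_eq_zero p hp (hM T Tᶜ disjoint_compl_right)
  have hvi : cmi p B A (fun ω => (X0 ω, C ω)) = cmi p B A (fun ω => (C ω, X0 ω)) := by
    refine cmi_congr p (rfl' B) (rfl' A) ?_
    intro ω ω'
    simp only [Prod.ext_iff]
    exact and_comm
  have n1 : 0 ≤ cmi p B A C := cmi_nonneg p hp B A C
  have n2 : 0 ≤ cmi p B C X0 := cmi_nonneg p hp B C X0
  have hcomm : cmi p X0 B C = cmi p B X0 C := cmi_comm p X0 B C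
  linarith
end
end

section
/- Under the Markov assumption that X_S − X_0 − X_T for all disjoint S,T ⊆ L, the value function v(S) = I(X_S; X_0 | X_{L\S}) is supermodular (the game is convex): for all U,V ⊆ L, v(U) + v(V) ≤ v(U∪V) + v(U∩V). -/
noncomputable section
open Finset
open scoped Classical BigOperators

set_option linter.unusedSectionVars false

namespace SK
variable {Ω : Type} [Fintype Ω]
variable {Ω : Type} [Fintype Ω]

lemma Pr_congr (p : Ω → ℝ) {E F : Ω → Prop} (h : ∀ ω, E ω ↔ F ω) : Pr p E = Pr p F := by
  unfold Pr
  exact Finset.sum_congr rfl fun ω _ => by simp only [h ω]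

lemma Pr_nonneg (p : Ω → ℝ) (hp : ∀ ω, 0 ≤ p ω) (E : Ω → Prop) : 0 ≤ Pr p E :=
  Finset.sum_nonneg fun ω _ => by by_cases h : E ω <;> simp [h, hp ω]

lemma Pr_fiber {T : Type} [Fintype T] (p : Ω → ℝ) (W : Ω → T) (E : Ω → Prop) :
    ∑ t : T, Pr p (fun ω => W ω = t ∧ E ω) = Pr p E := by
  unfold Pr
  rw [Finset.sum_comm]
  refine Finset.sum_congr rfl fun ω _ => ?_
  by_cases h : E ω <;> simp [h, Finset.sum_ite_eq]

lemma sum_Pr {T : Type} [Fintype T] (p : Ω → ℝ) (hp : IsPMF p) (W : Ω → T) :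
    ∑ t : T, Pr p (fun ω => W ω = t) = 1 := by
  have h := Pr_fiber p W (fun _ => True)
  have h2 : Pr p (fun _ => True) = 1 := by unfold Pr; simpa using hp.2
  rw [← h2, ← h]
  exact Finset.sum_congr rfl fun t _ => Pr_congr p fun ω => by simp

lemma ent_comp {α α' : Type} [Fintype α] [Fintype α'] (p : Ω → ℝ) (W : Ω → α) (f : α → α')
    (hf : Function.Injective f) :
    ent p (fun ω => f (W ω)) = ent p W := by
  unfold ent
  congr 1
  have h1 : ∀ a' ∉ Finset.image f Finset.univ, Pr p (fun ω => f (W ω) = a') = 0 := by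
    intro a' ha'
    have : ∀ ω, ¬ (f (W ω) = a') := fun ω h =>
      ha' (Finset.mem_image.2 ⟨W ω, Finset.mem_univ _, h⟩)
    unfold Pr; simp [this]
  rw [← Finset.sum_subset (Finset.subset_univ (Finset.image f Finset.univ))
      (fun a' _ ha' => by rw [h1 a' ha']; simp)]
  rw [Finset.sum_image (fun a _ b _ h => hf h)]
  refine Finset.sum_congr rfl fun a _ => ?_
  rw [Pr_congr p (fun ω => ⟨fun h => hf h, fun h => by rw [h]⟩ :
    ∀ ω, f (W ω) = f a ↔ W ω = a)]

lemma ent_congr_inj {α α' : Type} [Fintype α] [Fintype α'] (p : Ω → ℝ)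
    {W : Ω → α} {W' : Ω → α'} (f : α → α') (hf : Function.Injective f)
    (hW : ∀ ω, W' ω = f (W ω)) : ent p W' = ent p W := by
  have : W' = fun ω => f (W ω) := funext hW
  rw [this, ent_comp p W f hf]


end SK

namespace SK
variable {Ω α β γ : Type} [Fintype Ω] [Fintype α] [Fintype β] [Fintype γ]
variable (p : Ω → ℝ) (A : Ω → α) (B : Ω → β) (C : Ω → γ)

lemma margAC (a : α) (c : γ) :
    Pr p (fun ω => A ω = a ∧ C ω = c)
      = ∑ b : β, Pr p (fun ω => A ω = a ∧ B ω = b ∧ C ω = c) := by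
  rw [← Pr_fiber p B (fun ω => A ω = a ∧ C ω = c)]
  exact Finset.sum_congr rfl fun b _ => Pr_congr p fun ω => by tauto

lemma margBC (b : β) (c : γ) :
    Pr p (fun ω => B ω = b ∧ C ω = c)
      = ∑ a : α, Pr p (fun ω => A ω = a ∧ B ω = b ∧ C ω = c) := by
  rw [← Pr_fiber p A (fun ω => B ω = b ∧ C ω = c)]

lemma margC_A (c : γ) :
    Pr p (fun ω => C ω = c) = ∑ a : α, Pr p (fun ω => A ω = a ∧ C ω = c) := by
  rw [← Pr_fiber p A (fun ω => C ω = c)]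

lemma margC (c : γ) :
    Pr p (fun ω => C ω = c)
      = ∑ a : α, ∑ b : β, Pr p (fun ω => A ω = a ∧ B ω = b ∧ C ω = c) := by
  rw [margC_A p A C c]
  exact Finset.sum_congr rfl fun a _ => margAC p A B C a c

lemma cmi_eq_sum :
    cmi p A B C = ∑ a : α, ∑ b : β, ∑ c : γ,
      Pr p (fun ω => A ω = a ∧ B ω = b ∧ C ω = c) *
        (Real.log (Pr p (fun ω => A ω = a ∧ B ω = b ∧ C ω = c))
         + Real.log (Pr p (fun ω => C ω = c))
         - Real.log (Pr p (fun ω => A ω = a ∧ C ω = c))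
         - Real.log (Pr p (fun ω => B ω = b ∧ C ω = c))) := by
  have hAC : ent p (fun ω => (A ω, C ω))
      = -∑ a : α, ∑ c : γ, Pr p (fun ω => A ω = a ∧ C ω = c) *
          Real.log (Pr p (fun ω => A ω = a ∧ C ω = c)) := by
    unfold ent
    rw [Fintype.sum_prod_type]
    congr 1
    refine Finset.sum_congr rfl fun a _ => Finset.sum_congr rfl fun c _ => ?_
    rw [Pr_congr p (fun ω => by simp [Prod.ext_iff] :
      ∀ ω, (A ω, C ω) = (a, c) ↔ A ω = a ∧ C ω = c)]
  have hBC : ent p (fun ω => (B ω, C ω))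
      = -∑ b : β, ∑ c : γ, Pr p (fun ω => B ω = b ∧ C ω = c) *
          Real.log (Pr p (fun ω => B ω = b ∧ C ω = c)) := by
    unfold ent
    rw [Fintype.sum_prod_type]
    congr 1
    refine Finset.sum_congr rfl fun b _ => Finset.sum_congr rfl fun c _ => ?_
    rw [Pr_congr p (fun ω => by simp [Prod.ext_iff] :
      ∀ ω, (B ω, C ω) = (b, c) ↔ B ω = b ∧ C ω = c)]
  have hABC : ent p (fun ω => (A ω, B ω, C ω))
      = -∑ a : α, ∑ b : β, ∑ c : γ, Pr p (fun ω => A ω = a ∧ B ω = b ∧ C ω = c) *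
          Real.log (Pr p (fun ω => A ω = a ∧ B ω = b ∧ C ω = c)) := by
    unfold ent
    rw [Fintype.sum_prod_type]
    congr 1
    refine Finset.sum_congr rfl fun a _ => ?_
    rw [Fintype.sum_prod_type]
    refine Finset.sum_congr rfl fun b _ => Finset.sum_congr rfl fun c _ => ?_
    rw [Pr_congr p (fun ω => by simp [Prod.ext_iff] :
      ∀ ω, (A ω, B ω, C ω) = (a, b, c) ↔ A ω = a ∧ B ω = b ∧ C ω = c)]
  have hC : ent p C = -∑ c : γ, Pr p (fun ω => C ω = c) *
      Real.log (Pr p (fun ω => C ω = c)) := rfl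
  have S2 : ∑ a : α, ∑ b : β, ∑ c : γ,
      Pr p (fun ω => A ω = a ∧ B ω = b ∧ C ω = c) * Real.log (Pr p (fun ω => C ω = c))
      = ∑ c : γ, Pr p (fun ω => C ω = c) * Real.log (Pr p (fun ω => C ω = c)) := by
    have key : ∀ c : γ, Pr p (fun ω => C ω = c) * Real.log (Pr p (fun ω => C ω = c))
        = ∑ a : α, ∑ b : β,
            Pr p (fun ω => A ω = a ∧ B ω = b ∧ C ω = c) * Real.log (Pr p (fun ω => C ω = c)) := by
      intro c
      rw [margC p A B C c, Finset.sum_mul]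
      exact Finset.sum_congr rfl fun a _ => by rw [Finset.sum_mul]
    calc ∑ a : α, ∑ b : β, ∑ c : γ,
        Pr p (fun ω => A ω = a ∧ B ω = b ∧ C ω = c) * Real.log (Pr p (fun ω => C ω = c))
        = ∑ a : α, ∑ c : γ, ∑ b : β,
            Pr p (fun ω => A ω = a ∧ B ω = b ∧ C ω = c) * Real.log (Pr p (fun ω => C ω = c)) :=
          Finset.sum_congr rfl fun a _ => Finset.sum_comm
      _ = ∑ c : γ, ∑ a : α, ∑ b : β,
            Pr p (fun ω => A ω = a ∧ B ω = b ∧ C ω = c) * Real.log (Pr p (fun ω => C ω = c)) :=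
          Finset.sum_comm
      _ = ∑ c : γ, Pr p (fun ω => C ω = c) * Real.log (Pr p (fun ω => C ω = c)) :=
          (Finset.sum_congr rfl fun c _ => (key c).symm)
  have S3 : ∑ a : α, ∑ b : β, ∑ c : γ,
      Pr p (fun ω => A ω = a ∧ B ω = b ∧ C ω = c) *
        Real.log (Pr p (fun ω => A ω = a ∧ C ω = c))
      = ∑ a : α, ∑ c : γ, Pr p (fun ω => A ω = a ∧ C ω = c) *
          Real.log (Pr p (fun ω => A ω = a ∧ C ω = c)) := by
    refine Finset.sum_congr rfl fun a _ => ?_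
    rw [Finset.sum_comm]
    refine Finset.sum_congr rfl fun c _ => ?_
    rw [margAC p A B C a c, Finset.sum_mul]
  have S4 : ∑ a : α, ∑ b : β, ∑ c : γ,
      Pr p (fun ω => A ω = a ∧ B ω = b ∧ C ω = c) *
        Real.log (Pr p (fun ω => B ω = b ∧ C ω = c))
      = ∑ b : β, ∑ c : γ, Pr p (fun ω => B ω = b ∧ C ω = c) *
          Real.log (Pr p (fun ω => B ω = b ∧ C ω = c)) := by
    rw [Finset.sum_comm]
    refine Finset.sum_congr rfl fun b _ => ?_
    rw [Finset.sum_comm]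
    refine Finset.sum_congr rfl fun c _ => ?_
    rw [margBC p A B C b c, Finset.sum_mul]
  have expand : ∑ a : α, ∑ b : β, ∑ c : γ,
      Pr p (fun ω => A ω = a ∧ B ω = b ∧ C ω = c) *
        (Real.log (Pr p (fun ω => A ω = a ∧ B ω = b ∧ C ω = c))
         + Real.log (Pr p (fun ω => C ω = c))
         - Real.log (Pr p (fun ω => A ω = a ∧ C ω = c))
         - Real.log (Pr p (fun ω => B ω = b ∧ C ω = c)))
      = (∑ a : α, ∑ b : β, ∑ c : γ,
          Pr p (fun ω => A ω = a ∧ B ω = b ∧ C ω = c) *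
            Real.log (Pr p (fun ω => A ω = a ∧ B ω = b ∧ C ω = c)))
        + (∑ a : α, ∑ b : β, ∑ c : γ,
          Pr p (fun ω => A ω = a ∧ B ω = b ∧ C ω = c) * Real.log (Pr p (fun ω => C ω = c)))
        - (∑ a : α, ∑ b : β, ∑ c : γ,
          Pr p (fun ω => A ω = a ∧ B ω = b ∧ C ω = c) *
            Real.log (Pr p (fun ω => A ω = a ∧ C ω = c)))
        - (∑ a : α, ∑ b : β, ∑ c : γ,
          Pr p (fun ω => A ω = a ∧ B ω = b ∧ C ω = c) *
            Real.log (Pr p (fun ω => B ω = b ∧ C ω = c))) := by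
    simp only [mul_add, mul_sub, Finset.sum_add_distrib, Finset.sum_sub_distrib]
  rw [expand, S2, S3, S4]
  unfold cmi
  rw [hAC, hBC, hABC, hC]
  ring
lemma margC_B (c : γ) :
    Pr p (fun ω => C ω = c) = ∑ b : β, Pr p (fun ω => B ω = b ∧ C ω = c) := by
  rw [← Pr_fiber p B (fun ω => C ω = c)]

lemma sumF_eq_one (hp : IsPMF p) :
    ∑ a : α, ∑ b : β, ∑ c : γ, Pr p (fun ω => A ω = a ∧ B ω = b ∧ C ω = c) = 1 := by
  have h1 : ∑ t : α × β × γ, Pr p (fun ω => (A ω, B ω, C ω) = t) = 1 :=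
    sum_Pr p hp (fun ω => (A ω, B ω, C ω))
  have h2 : ∀ (a : α) (b : β) (c : γ), Pr p (fun ω => (A ω, B ω, C ω) = (a, b, c))
      = Pr p (fun ω => A ω = a ∧ B ω = b ∧ C ω = c) := fun a b c =>
    Pr_congr p fun ω => by simp [Prod.ext_iff]
  simp only [Fintype.sum_prod_type, h2] at h1
  exact h1

lemma sumQ_eq_one (hp : IsPMF p) :
    ∑ a : α, ∑ b : β, ∑ c : γ,
      Pr p (fun ω => A ω = a ∧ C ω = c) * Pr p (fun ω => B ω = b ∧ C ω = c)
        / Pr p (fun ω => C ω = c) = 1 := by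
  calc ∑ a : α, ∑ b : β, ∑ c : γ,
      Pr p (fun ω => A ω = a ∧ C ω = c) * Pr p (fun ω => B ω = b ∧ C ω = c)
        / Pr p (fun ω => C ω = c)
      = ∑ a : α, ∑ c : γ, ∑ b : β,
        Pr p (fun ω => A ω = a ∧ C ω = c) * Pr p (fun ω => B ω = b ∧ C ω = c)
          / Pr p (fun ω => C ω = c) := Finset.sum_congr rfl fun a _ => Finset.sum_comm
    _ = ∑ c : γ, ∑ a : α, ∑ b : β,
        Pr p (fun ω => A ω = a ∧ C ω = c) * Pr p (fun ω => B ω = b ∧ C ω = c)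
          / Pr p (fun ω => C ω = c) := Finset.sum_comm
    _ = ∑ c : γ, (∑ a : α, Pr p (fun ω => A ω = a ∧ C ω = c))
          * (∑ b : β, Pr p (fun ω => B ω = b ∧ C ω = c)) / Pr p (fun ω => C ω = c) := by
        refine Finset.sum_congr rfl fun c _ => ?_
        rw [Finset.sum_mul_sum, Finset.sum_div]
        exact Finset.sum_congr rfl fun a _ => by rw [Finset.sum_div]
    _ = ∑ c : γ, Pr p (fun ω => C ω = c) * Pr p (fun ω => C ω = c)
          / Pr p (fun ω => C ω = c) := by
        refine Finset.sum_congr rfl fun c _ => ?_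
        rw [← margC_A p A C c, ← margC_B p B C c]
    _ = ∑ c : γ, Pr p (fun ω => C ω = c) := by
        refine Finset.sum_congr rfl fun c _ => ?_
        rcases eq_or_ne (Pr p (fun ω => C ω = c)) 0 with h | h
        · simp [h]
        · rw [mul_div_assoc, div_self h, mul_one]
    _ = 1 := sum_Pr p hp C

lemma cmi_nonneg (hp : IsPMF p) : 0 ≤ cmi p A B C := by
  rw [cmi_eq_sum p A B C]
  have hFnn : ∀ (a : α) (b : β) (c : γ),
      0 ≤ Pr p (fun ω => A ω = a ∧ B ω = b ∧ C ω = c) := fun a b c => Pr_nonneg p hp.1 _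
  have key : ∀ (a : α) (b : β) (c : γ),
      Pr p (fun ω => A ω = a ∧ B ω = b ∧ C ω = c)
        - Pr p (fun ω => A ω = a ∧ C ω = c) * Pr p (fun ω => B ω = b ∧ C ω = c)
            / Pr p (fun ω => C ω = c)
      ≤ Pr p (fun ω => A ω = a ∧ B ω = b ∧ C ω = c) *
          (Real.log (Pr p (fun ω => A ω = a ∧ B ω = b ∧ C ω = c))
           + Real.log (Pr p (fun ω => C ω = c))
           - Real.log (Pr p (fun ω => A ω = a ∧ C ω = c))
           - Real.log (Pr p (fun ω => B ω = b ∧ C ω = c))) := by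
    intro a b c
    rcases eq_or_lt_of_le (hFnn a b c) with hF | hF
    · rw [← hF, zero_mul, zero_sub, neg_nonpos]
      exact div_nonneg (mul_nonneg (Pr_nonneg p hp.1 _) (Pr_nonneg p hp.1 _)) (Pr_nonneg p hp.1 _)
    · have hAC : 0 < Pr p (fun ω => A ω = a ∧ C ω = c) := by
        rw [margAC p A B C a c]
        exact lt_of_lt_of_le hF
          (Finset.single_le_sum (f := fun b' => Pr p (fun ω => A ω = a ∧ B ω = b' ∧ C ω = c))
            (fun b' _ => Pr_nonneg p hp.1 _) (Finset.mem_univ b))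
      have hBC : 0 < Pr p (fun ω => B ω = b ∧ C ω = c) := by
        rw [margBC p A B C b c]
        exact lt_of_lt_of_le hF
          (Finset.single_le_sum (f := fun a' => Pr p (fun ω => A ω = a' ∧ B ω = b ∧ C ω = c))
            (fun a' _ => Pr_nonneg p hp.1 _) (Finset.mem_univ a))
      have hC : 0 < Pr p (fun ω => C ω = c) := by
        rw [margC_A p A C c]
        exact lt_of_lt_of_le hAC
          (Finset.single_le_sum (f := fun a' => Pr p (fun ω => A ω = a' ∧ C ω = c))
            (fun a' _ => Pr_nonneg p hp.1 _) (Finset.mem_univ a))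
      set F := Pr p (fun ω => A ω = a ∧ B ω = b ∧ C ω = c) with hFdef
      set PAC := Pr p (fun ω => A ω = a ∧ C ω = c) with hPACdef
      set PBC := Pr p (fun ω => B ω = b ∧ C ω = c) with hPBCdef
      set PC := Pr p (fun ω => C ω = c) with hPCdef
      have hQ : 0 < PAC * PBC / PC := div_pos (mul_pos hAC hBC) hC
      have hlog : Real.log (PAC * PBC / PC / F) ≤ PAC * PBC / PC / F - 1 :=
        Real.log_le_sub_one_of_pos (div_pos hQ hF)
      have hrw : Real.log (PAC * PBC / PC / F)
          = Real.log PAC + Real.log PBC - Real.log PC - Real.log F := by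
        rw [div_div, Real.log_div (mul_pos hAC hBC).ne' (mul_pos hC hF).ne',
          Real.log_mul hAC.ne' hBC.ne', Real.log_mul hC.ne' hF.ne']
        ring
      have h1 : F * Real.log (PAC * PBC / PC / F) ≤ F * (PAC * PBC / PC / F - 1) :=
        mul_le_mul_of_nonneg_left hlog hF.le
      have h2 : F * (PAC * PBC / PC / F - 1) = PAC * PBC / PC - F := by
        field_simp
      have h3 : F * (Real.log F + Real.log PC - Real.log PAC - Real.log PBC)
          = -(F * Real.log (PAC * PBC / PC / F)) := by rw [hrw]; ring
      rw [h3]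
      linarith
  have hmain : ∑ a : α, ∑ b : β, ∑ c : γ,
      (Pr p (fun ω => A ω = a ∧ B ω = b ∧ C ω = c)
        - Pr p (fun ω => A ω = a ∧ C ω = c) * Pr p (fun ω => B ω = b ∧ C ω = c)
            / Pr p (fun ω => C ω = c))
      ≤ ∑ a : α, ∑ b : β, ∑ c : γ,
        Pr p (fun ω => A ω = a ∧ B ω = b ∧ C ω = c) *
          (Real.log (Pr p (fun ω => A ω = a ∧ B ω = b ∧ C ω = c))
           + Real.log (Pr p (fun ω => C ω = c))
           - Real.log (Pr p (fun ω => A ω = a ∧ C ω = c))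
           - Real.log (Pr p (fun ω => B ω = b ∧ C ω = c))) :=
    Finset.sum_le_sum fun a _ => Finset.sum_le_sum fun b _ =>
      Finset.sum_le_sum fun c _ => key a b c
  have hsplit : ∑ a : α, ∑ b : β, ∑ c : γ,
      (Pr p (fun ω => A ω = a ∧ B ω = b ∧ C ω = c)
        - Pr p (fun ω => A ω = a ∧ C ω = c) * Pr p (fun ω => B ω = b ∧ C ω = c)
            / Pr p (fun ω => C ω = c))
      = (∑ a : α, ∑ b : β, ∑ c : γ, Pr p (fun ω => A ω = a ∧ B ω = b ∧ C ω = c))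
        - ∑ a : α, ∑ b : β, ∑ c : γ,
            Pr p (fun ω => A ω = a ∧ C ω = c) * Pr p (fun ω => B ω = b ∧ C ω = c)
              / Pr p (fun ω => C ω = c) := by
    simp only [Finset.sum_sub_distrib]
  rw [hsplit, sumF_eq_one p A B C hp, sumQ_eq_one p A B C hp] at hmain
  linarith

lemma cmi_eq_zero (hp : IsPMF p) (h : CondIndep p A B C) : cmi p A B C = 0 := by
  rw [cmi_eq_sum p A B C]
  refine Finset.sum_eq_zero fun a _ => Finset.sum_eq_zero fun b _ =>
    Finset.sum_eq_zero fun c _ => ?_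
  rcases eq_or_lt_of_le (Pr_nonneg p hp.1 (fun ω => A ω = a ∧ B ω = b ∧ C ω = c)) with hF | hF
  · rw [← hF, zero_mul]
  · have hAC : 0 < Pr p (fun ω => A ω = a ∧ C ω = c) := by
      rw [margAC p A B C a c]
      exact lt_of_lt_of_le hF
        (Finset.single_le_sum (f := fun b' => Pr p (fun ω => A ω = a ∧ B ω = b' ∧ C ω = c))
          (fun b' _ => Pr_nonneg p hp.1 _) (Finset.mem_univ b))
    have hBC : 0 < Pr p (fun ω => B ω = b ∧ C ω = c) := by
      rw [margBC p A B C b c]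
      exact lt_of_lt_of_le hF
        (Finset.single_le_sum (f := fun a' => Pr p (fun ω => A ω = a' ∧ B ω = b ∧ C ω = c))
          (fun a' _ => Pr_nonneg p hp.1 _) (Finset.mem_univ a))
    have hC : 0 < Pr p (fun ω => C ω = c) := by
      rw [margC_A p A C c]
      exact lt_of_lt_of_le hAC
        (Finset.single_le_sum (f := fun a' => Pr p (fun ω => A ω = a' ∧ C ω = c))
          (fun a' _ => Pr_nonneg p hp.1 _) (Finset.mem_univ a))
    have hlog := congrArg Real.log (h a b c)
    rw [Real.log_mul hF.ne' hC.ne', Real.log_mul hAC.ne' hBC.ne'] at hlog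
    have hz : Real.log (Pr p (fun ω => A ω = a ∧ B ω = b ∧ C ω = c))
        + Real.log (Pr p (fun ω => C ω = c))
        - Real.log (Pr p (fun ω => A ω = a ∧ C ω = c))
        - Real.log (Pr p (fun ω => B ω = b ∧ C ω = c)) = 0 := by linarith
    rw [hz, mul_zero]

end SK

namespace SK

def res {L 𝒳 : Type} {S T : Finset L} (h : S ⊆ T) (g : ↥T → 𝒳) : ↥S → 𝒳 :=
  fun i => g ⟨i.1, h i.2⟩

variable {Ω L 𝒳 β : Type} [Fintype Ω] [Fintype L] [DecidableEq L] [Fintype 𝒳] [Fintype β]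
variable (p : Ω → ℝ) (X : L → Ω → 𝒳) (X0 : Ω → β)

lemma ent_XS_pair (S T : Finset L) :
    ent p (fun ω => (XS X S ω, XS X T ω)) = ent p (XS X (S ∪ T)) := by
  refine ent_congr_inj p
    (f := fun g : (↥(S ∪ T) → 𝒳) =>
      ((res Finset.subset_union_left g : ↥S → 𝒳),
       (res Finset.subset_union_right g : ↥T → 𝒳))) ?_ (fun ω => rfl)
  intro g g' hg
  funext j
  rcases Finset.mem_union.mp j.2 with hj | hj
  · exact congrFun (congrArg Prod.fst hg) ⟨j.1, hj⟩
  · exact congrFun (congrArg Prod.snd hg) ⟨j.1, hj⟩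

lemma ent_XS_triple (S T R : Finset L) :
    ent p (fun ω => (XS X S ω, (XS X T ω, XS X R ω))) = ent p (XS X (S ∪ T ∪ R)) := by
  have hS : S ⊆ S ∪ T ∪ R := Finset.subset_union_left.trans Finset.subset_union_left
  have hT : T ⊆ S ∪ T ∪ R := Finset.subset_union_right.trans Finset.subset_union_left
  have hR : R ⊆ S ∪ T ∪ R := Finset.subset_union_right
  refine ent_congr_inj p
    (f := fun g : (↥(S ∪ T ∪ R) → 𝒳) =>
      ((res hS g : ↥S → 𝒳),
       ((res hT g : ↥T → 𝒳), (res hR g : ↥R → 𝒳)))) ?_ (fun ω => rfl)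
  intro g g' hg
  funext j
  rcases Finset.mem_union.mp j.2 with hj | hj
  · rcases Finset.mem_union.mp hj with hj' | hj'
    · exact congrFun (congrArg Prod.fst hg) ⟨j.1, hj'⟩
    · exact congrFun (congrArg (fun x => x.2.1) hg) ⟨j.1, hj'⟩
  · exact congrFun (congrArg (fun x => x.2.2) hg) ⟨j.1, hj⟩

lemma ent_XS_x0_pair (S T : Finset L) :
    ent p (fun ω => (XS X S ω, (X0 ω, XS X T ω)))
      = ent p (fun ω => (X0 ω, XS X (S ∪ T) ω)) := by
  refine ent_congr_inj p
    (f := fun bg : β × (↥(S ∪ T) → 𝒳) =>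
      ((res Finset.subset_union_left bg.2 : ↥S → 𝒳),
       (bg.1, (res Finset.subset_union_right bg.2 : ↥T → 𝒳)))) ?_ (fun ω => rfl)
  rintro ⟨b, g⟩ ⟨b', g'⟩ hg
  simp only [Prod.mk.injEq] at hg
  refine Prod.ext hg.2.1 (funext fun j => ?_)
  rcases Finset.mem_union.mp j.2 with hj | hj
  · exact congrFun hg.1 ⟨j.1, hj⟩
  · exact congrFun hg.2.2 ⟨j.1, hj⟩

lemma ent_XS_XS_x0_pair (S T R : Finset L) :
    ent p (fun ω => (XS X S ω, (XS X T ω, (X0 ω, XS X R ω))))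
      = ent p (fun ω => (X0 ω, XS X (S ∪ T ∪ R) ω)) := by
  have hS : S ⊆ S ∪ T ∪ R := Finset.subset_union_left.trans Finset.subset_union_left
  have hT : T ⊆ S ∪ T ∪ R := Finset.subset_union_right.trans Finset.subset_union_left
  have hR : R ⊆ S ∪ T ∪ R := Finset.subset_union_right
  refine ent_congr_inj p
    (f := fun bg : β × (↥(S ∪ T ∪ R) → 𝒳) =>
      ((res hS bg.2 : ↥S → 𝒳),
       ((res hT bg.2 : ↥T → 𝒳),
        (bg.1, (res hR bg.2 : ↥R → 𝒳))))) ?_ (fun ω => rfl)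
  rintro ⟨b, g⟩ ⟨b', g'⟩ hg
  simp only [Prod.mk.injEq] at hg
  refine Prod.ext hg.2.2.1 (funext fun j => ?_)
  rcases Finset.mem_union.mp j.2 with hj | hj
  · rcases Finset.mem_union.mp hj with hj' | hj'
    · exact congrFun hg.1 ⟨j.1, hj'⟩
    · exact congrFun hg.2.1 ⟨j.1, hj'⟩
  · exact congrFun hg.2.2.2 ⟨j.1, hj⟩

lemma ent_XS_x0 (S : Finset L) :
    ent p (fun ω => (XS X S ω, X0 ω)) = ent p (fun ω => (X0 ω, XS X S ω)) :=
  ent_congr_inj p (f := Prod.swap) Prod.swap_injective (fun ω => rfl)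

lemma ent_XS_XS_x0 (S T : Finset L) :
    ent p (fun ω => (XS X S ω, (XS X T ω, X0 ω)))
      = ent p (fun ω => (X0 ω, XS X (S ∪ T) ω)) := by
  refine ent_congr_inj p
    (f := fun bg : β × (↥(S ∪ T) → 𝒳) =>
      ((res Finset.subset_union_left bg.2 : ↥S → 𝒳),
       ((res Finset.subset_union_right bg.2 : ↥T → 𝒳), bg.1))) ?_ (fun ω => rfl)
  rintro ⟨b, g⟩ ⟨b', g'⟩ hg
  simp only [Prod.mk.injEq] at hg
  refine Prod.ext hg.2.2 (funext fun j => ?_)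
  rcases Finset.mem_union.mp j.2 with hj | hj
  · exact congrFun hg.1 ⟨j.1, hj⟩
  · exact congrFun hg.2.1 ⟨j.1, hj⟩


end SK

namespace SK
variable {Ω L 𝒳 β : Type} [Fintype Ω] [Fintype L] [DecidableEq L] [Fintype 𝒳] [Fintype β]
variable (p : Ω → ℝ) (X : L → Ω → 𝒳) (X0 : Ω → β)

lemma key (hp : IsPMF p) (C D E : Finset L)
    (hMarkov : CondIndep p (XS X (C ∪ D)) (XS X E) X0) :
    (ent p (fun ω => (X0 ω, XS X (C ∪ D) ω)) - ent p (XS X (C ∪ D)))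
      + (ent p (fun ω => (X0 ω, XS X (C ∪ E) ω)) - ent p (XS X (C ∪ E)))
    ≤ (ent p (fun ω => (X0 ω, XS X C ω)) - ent p (XS X C))
      + (ent p (fun ω => (X0 ω, XS X (C ∪ D ∪ E) ω)) - ent p (XS X (C ∪ D ∪ E))) := by
  have q1nn := cmi_nonneg p (XS X D) (XS X E) (fun ω => (X0 ω, XS X C ω)) hp
  have q2nn := cmi_nonneg p (XS X D) (XS X E) (XS X C) hp
  have q4nn := cmi_nonneg p (XS X C) (XS X E) X0 hp
  have q3z := cmi_eq_zero p (XS X (C ∪ D)) (XS X E) X0 hp hMarkov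
  have hswap : D ∪ E ∪ C = C ∪ D ∪ E := by
    rw [Finset.union_comm, ← Finset.union_assoc]
  have e1 : cmi p (XS X D) (XS X E) (fun ω => (X0 ω, XS X C ω))
      = ent p (fun ω => (X0 ω, XS X (C ∪ D) ω)) + ent p (fun ω => (X0 ω, XS X (C ∪ E) ω))
        - ent p (fun ω => (X0 ω, XS X (C ∪ D ∪ E) ω)) - ent p (fun ω => (X0 ω, XS X C ω)) := by
    simp only [cmi]
    rw [ent_XS_x0_pair p X X0 D C, ent_XS_x0_pair p X X0 E C,
      ent_XS_XS_x0_pair p X X0 D E C, Finset.union_comm D C, Finset.union_comm E C, hswap]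
  have e2 : cmi p (XS X D) (XS X E) (XS X C)
      = ent p (XS X (C ∪ D)) + ent p (XS X (C ∪ E))
        - ent p (XS X (C ∪ D ∪ E)) - ent p (XS X C) := by
    simp only [cmi]
    rw [ent_XS_pair p X D C, ent_XS_pair p X E C,
      ent_XS_triple p X D E C, Finset.union_comm D C, Finset.union_comm E C, hswap]
  have e3 : cmi p (XS X (C ∪ D)) (XS X E) X0
      = ent p (fun ω => (X0 ω, XS X (C ∪ D) ω)) + ent p (fun ω => (X0 ω, XS X E ω))
        - ent p (fun ω => (X0 ω, XS X (C ∪ D ∪ E) ω)) - ent p X0 := by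
    simp only [cmi]
    rw [ent_XS_x0 p X X0 (C ∪ D), ent_XS_x0 p X X0 E, ent_XS_XS_x0 p X X0 (C ∪ D) E]
  have e4 : cmi p (XS X C) (XS X E) X0
      = ent p (fun ω => (X0 ω, XS X C ω)) + ent p (fun ω => (X0 ω, XS X E ω))
        - ent p (fun ω => (X0 ω, XS X (C ∪ E) ω)) - ent p X0 := by
    simp only [cmi]
    rw [ent_XS_x0 p X X0 C, ent_XS_x0 p X X0 E, ent_XS_XS_x0 p X X0 C E]
  linarith


end SK

/-- the value function `v(S) = I(X_S; X_0 | X_{L\S})` is supermodular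
(the game is convex). -/
theorem statement4 {Ω L 𝒳 β : Type} [Fintype Ω] [Fintype L] [DecidableEq L] [Fintype 𝒳] [Fintype β]
    (p : Ω → ℝ) (hp : IsPMF p) (X : L → Ω → 𝒳) (X0 : Ω → β)
    (hM : ∀ S T : Finset L, Disjoint S T → CondIndep p (XS X S) (XS X T) X0) :
    ∀ U V : Finset L,
      vGame p X X0 U + vGame p X X0 V
        ≤ vGame p X X0 (U ∪ V) + vGame p X X0 (U ∩ V) := by
  intro U V
  have expand : ∀ S : Finset L, vGame p X X0 S =
      ent p (XS X (S ∪ Sᶜ)) + ent p (fun ω => (X0 ω, XS X Sᶜ ω))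
        - ent p (fun ω => (X0 ω, XS X (S ∪ Sᶜ) ω)) - ent p (XS X Sᶜ) := by
    intro S
    simp only [vGame, cmi]
    rw [SK.ent_XS_pair p X S Sᶜ, SK.ent_XS_x0_pair p X X0 S Sᶜ]
  rw [expand U, expand V, expand (U ∪ V), expand (U ∩ V)]
  rw [union_compl U, union_compl V, union_compl (U ∪ V), union_compl (U ∩ V),
    compl_union U V, compl_inter U V]
  have hA : Uᶜ ∩ Vᶜ ∪ Uᶜ \ Vᶜ = Uᶜ := by
    rw [Finset.union_comm]; exact Finset.sdiff_union_inter _ _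
  have hB : Uᶜ ∩ Vᶜ ∪ Vᶜ \ Uᶜ = Vᶜ := by
    rw [Finset.inter_comm, Finset.union_comm]; exact Finset.sdiff_union_inter _ _
  have hAB : Uᶜ ∩ Vᶜ ∪ Uᶜ \ Vᶜ ∪ Vᶜ \ Uᶜ = Uᶜ ∪ Vᶜ := by
    rw [hA, Finset.union_sdiff_self_eq_union]
  have hdisj : Disjoint (Uᶜ ∩ Vᶜ ∪ Uᶜ \ Vᶜ) (Vᶜ \ Uᶜ) := by
    rw [hA]; exact Finset.disjoint_sdiff
  have hk := SK.key p X X0 hp (Uᶜ ∩ Vᶜ) (Uᶜ \ Vᶜ) (Vᶜ \ Uᶜ) (hM _ _ hdisj)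
  rw [hAB, hA, hB] at hk
  linarith
end
end

section
/- (Leftover hash lemma for concatenated hash functions, unconditioned version) Let X_L = (X_l)_{l∈L} be random variables taking values in finite sets, and for each l let F_l be uniformly and independently chosen from a family 𝓕_l of two-universal hash functions from X_l's alphabet to {0,1}^{r_l}. Then the collision probability satisfies P[(F_L(X_L), F_L) = (F'_L(X'_L), F'_L)] ≤ s_L^{-1} Σ_{S ⊆ L} 2^{−r_S − H_∞(X_{S^c})}, where (X'_L, F'_L) is an independent copy, s_L = Π_l |𝓕_l|, r_S = Σ_{i∈S} r_i, and F_L(X_L) is the concatenation of the F_l(X_l). -/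
noncomputable section
open Finset
open scoped Classical BigOperators

/-- Marginal pmf of `q` over the coordinates in `T`. -/
def marg {L : Type} [Fintype L] [DecidableEq L] {𝒳 : L → Type} [∀ l, Fintype (𝒳 l)]
    (q : (∀ l, 𝒳 l) → ℝ) (T : Finset L) (a : ∀ i : T, 𝒳 i.1) : ℝ :=
  ∑ x : ∀ l, 𝒳 l, if (∀ i : T, x i.1 = a i) then q x else 0

/-- Min-entropy (base 2) of the marginal of `q` on the coordinates in `T`:
`H_∞(X_T) = -log₂ max_a P[X_T = a]`. -/
def minEnt {L : Type} [Fintype L] [DecidableEq L] {𝒳 : L → Type} [∀ l, Fintype (𝒳 l)]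
    (q : (∀ l, 𝒳 l) → ℝ) (T : Finset L) : ℝ :=
  - Real.logb 2 (⨆ a : ∀ i : T, 𝒳 i.1, marg q T a)

/-- The family `(f l i)_{i : ι l}` is a two-universal family of hash functions into
`{0,1}^{r l}`, under the uniform choice of the index. -/
def TwoUniversal {L : Type} {𝒳 ι : L → Type} [∀ l, Fintype (ι l)]
    (r : L → ℕ) (f : ∀ l, ι l → 𝒳 l → (Fin (r l) → Bool)) : Prop :=
  ∀ l, ∀ x x' : 𝒳 l, x ≠ x' →
    ((Finset.univ.filter (fun i : ι l => f l i x = f l i x')).card : ℝ)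
        / (Fintype.card (ι l) : ℝ)
      ≤ ((2 : ℝ) ^ (r l))⁻¹


section AuxLemmas
variable {L : Type} [Fintype L] [DecidableEq L] {𝒳 : L → Type} [∀ l, Fintype (𝒳 l)]

lemma marg_nonneg (q : (∀ l, 𝒳 l) → ℝ) (hq0 : ∀ ω, 0 ≤ q ω) (T : Finset L)
    (a : ∀ i : T, 𝒳 i.1) : 0 ≤ marg q T a :=
  Finset.sum_nonneg fun x _ => by split_ifs; exacts [hq0 x, le_rfl]

lemma sum_marg (q : (∀ l, 𝒳 l) → ℝ) (hq : IsPMF q) (T : Finset L) :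
    ∑ a : ∀ i : T, 𝒳 i.1, marg q T a = 1 := by
  unfold marg
  rw [Finset.sum_comm]
  have key : ∀ x : ∀ l, 𝒳 l, ∑ a : ∀ i : T, 𝒳 i.1,
      (if (∀ i : T, x i.1 = a i) then q x else 0) = q x := by
    intro x
    have h1 : ∀ a : ∀ i : T, 𝒳 i.1,
        (if (∀ i : T, x i.1 = a i) then q x else 0)
          = (if a = (fun i : T => x i.1) then q x else 0) := by
      intro a
      refine if_congr ⟨fun h => funext fun i => (h i).symm, fun h i => by rw [h]⟩ rfl rfl
    rw [Finset.sum_congr rfl fun a _ => h1 a, Finset.sum_ite_eq' Finset.univ]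
    simp
  rw [Finset.sum_congr rfl fun x _ => key x, hq.2]

lemma marg_le_sup (q : (∀ l, 𝒳 l) → ℝ) (T : Finset L) (a : ∀ i : T, 𝒳 i.1) :
    marg q T a ≤ ⨆ b : ∀ i : T, 𝒳 i.1, marg q T b :=
  le_ciSup (Set.finite_range _).bddAbove a

lemma sup_marg_pos (q : (∀ l, 𝒳 l) → ℝ) (hq : IsPMF q) (T : Finset L) :
    0 < ⨆ a : ∀ i : T, 𝒳 i.1, marg q T a := by
  by_contra h
  push_neg at h
  have h1 : (1:ℝ) ≤ 0 := by
    rw [← sum_marg q hq T]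
    exact Finset.sum_nonpos fun a _ => (marg_le_sup q T a).trans h
  linarith

lemma rpow_neg_minEnt (q : (∀ l, 𝒳 l) → ℝ) (hq : IsPMF q) (T : Finset L) :
    (2:ℝ) ^ (-minEnt q T) = ⨆ a : ∀ i : T, 𝒳 i.1, marg q T a := by
  unfold minEnt
  rw [neg_neg]
  exact Real.rpow_logb two_pos (by norm_num) (sup_marg_pos q hq T)

end AuxLemmas

lemma sum_comm3 {α β γ : Type*} [Fintype α] [Fintype β] [Fintype γ] (F : α → β → γ → ℝ) :
    ∑ a : α, ∑ b : β, ∑ c : γ, F a b c = ∑ c : γ, ∑ a : α, ∑ b : β, F a b c := by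
  calc ∑ a : α, ∑ b : β, ∑ c : γ, F a b c
      = ∑ a : α, ∑ c : γ, ∑ b : β, F a b c :=
        Finset.sum_congr rfl fun a _ => Finset.sum_comm
    _ = ∑ c : γ, ∑ a : α, ∑ b : β, F a b c := Finset.sum_comm

lemma sum_swap4 {α β γ δ : Type*} [Fintype α] [Fintype β] [Fintype γ] [Fintype δ]
    (F : α → β → γ → δ → ℝ) :
    ∑ g : α, ∑ g' : β, ∑ x : γ, ∑ x' : δ, F g g' x x'
      = ∑ x : γ, ∑ x' : δ, ∑ g : α, ∑ g' : β, F g g' x x' := by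
  calc ∑ g : α, ∑ g' : β, ∑ x : γ, ∑ x' : δ, F g g' x x'
      = ∑ g : α, ∑ x : γ, ∑ g' : β, ∑ x' : δ, F g g' x x' :=
        Finset.sum_congr rfl fun g _ => Finset.sum_comm
    _ = ∑ x : γ, ∑ g : α, ∑ g' : β, ∑ x' : δ, F g g' x x' := Finset.sum_comm
    _ = ∑ x : γ, ∑ g : α, ∑ x' : δ, ∑ g' : β, F g g' x x' :=
        Finset.sum_congr rfl fun x _ => Finset.sum_congr rfl fun g _ => Finset.sum_comm
    _ = ∑ x : γ, ∑ x' : δ, ∑ g : α, ∑ g' : β, F g g' x x' :=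
        Finset.sum_congr rfl fun x _ => Finset.sum_comm

/-- leftover hash lemma for concatenated hash functions, collision
probability version:
`P[(F_L(X_L),F_L) = (F'_L(X'_L),F'_L)] ≤ s_L⁻¹ Σ_{S⊆L} 2^{-r_S - H_∞(X_{S^c})}`. -/
theorem statement13 {L : Type} [Fintype L] [DecidableEq L]
    {𝒳 : L → Type} [∀ l, Fintype (𝒳 l)] {ι : L → Type} [∀ l, Fintype (ι l)]
    [∀ l, Nonempty (ι l)]
    (r : L → ℕ) (f : ∀ l, ι l → 𝒳 l → (Fin (r l) → Bool))
    (huniv : TwoUniversal r f)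
    (q : (∀ l, 𝒳 l) → ℝ) (hq : IsPMF q) :
    (∑ g : ∀ l, ι l, ∑ g' : ∀ l, ι l, ∑ x : ∀ l, 𝒳 l, ∑ x' : ∀ l, 𝒳 l,
        (∏ l, (Fintype.card (ι l) : ℝ))⁻¹ * (∏ l, (Fintype.card (ι l) : ℝ))⁻¹
          * q x * q x' *
          (if g = g' ∧ (∀ l, f l (g l) (x l) = f l (g' l) (x' l)) then (1 : ℝ) else 0))
      ≤ (∏ l, (Fintype.card (ι l) : ℝ))⁻¹ *
          ∑ S : Finset L, (2 : ℝ) ^ (-(∑ i ∈ S, (r i : ℝ)) - minEnt q Sᶜ) := by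
  classical
  have hq0 := hq.1
  set s : ℝ := ∏ l, (Fintype.card (ι l) : ℝ) with hs_def
  have hcard : ∀ l : L, (0:ℝ) < (Fintype.card (ι l) : ℝ) := fun l => by
    exact_mod_cast Fintype.card_pos
  have hs0 : 0 < s := Finset.prod_pos fun l _ => hcard l
  set c : ∀ l : L, 𝒳 l → 𝒳 l → ℝ := fun l x x' =>
    ((Finset.univ.filter (fun i : ι l => f l i x = f l i x')).card : ℝ)
      / (Fintype.card (ι l) : ℝ) with hc_def
  have hc0 : ∀ l x x', 0 ≤ c l x x' := fun l x x' =>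
    div_nonneg (Nat.cast_nonneg _) (le_of_lt (hcard l))
  have hc1 : ∀ l x x', c l x x' ≤ 1 := fun l x x' => by
    simp only [hc_def]
    rw [div_le_one (hcard l)]
    exact_mod_cast (Finset.card_filter_le _ _).trans (le_of_eq Finset.card_univ)
  have hcu : ∀ l (x x' : 𝒳 l), x ≠ x' → c l x x' ≤ ((2:ℝ) ^ (r l))⁻¹ :=
    fun l x x' h => huniv l x x' h
  set w : Finset L → ℝ := fun S => ∏ l ∈ S, ((2:ℝ) ^ (r l))⁻¹ with hw_def
  have hw : ∀ S : Finset L, (0:ℝ) ≤ w S := fun S =>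
    Finset.prod_nonneg fun l _ => by positivity
  set M : Finset L → ℝ := fun T => ⨆ a : ∀ i : T, 𝒳 i.1, marg q T a with hM_def
  -- Step A : collapse g' sum and compute the g-sum as a product
  have keyA : ∀ x x' : ∀ l, 𝒳 l,
      (∑ g : ∀ l, ι l, ∑ g' : ∀ l, ι l,
        (if g = g' ∧ (∀ l, f l (g l) (x l) = f l (g' l) (x' l)) then (1:ℝ) else 0))
      = s * ∏ l, c l (x l) (x' l) := by
    intro x x'
    have hcol : ∀ g : ∀ l, ι l,
        (∑ g' : ∀ l, ι l,
          (if g = g' ∧ (∀ l, f l (g l) (x l) = f l (g' l) (x' l)) then (1:ℝ) else 0))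
        = (if (∀ l, f l (g l) (x l) = f l (g l) (x' l)) then (1:ℝ) else 0) := by
      intro g
      rw [Finset.sum_eq_single_of_mem g (Finset.mem_univ g)]
      · simp
      · intro g' _ hne
        rw [if_neg]
        rintro ⟨h, -⟩
        exact hne h.symm
    have hprod : ∀ g : ∀ l, ι l,
        (if (∀ l, f l (g l) (x l) = f l (g l) (x' l)) then (1:ℝ) else 0)
        = ∏ l, (if f l (g l) (x l) = f l (g l) (x' l) then (1:ℝ) else 0) := by
      intro g
      by_cases h : ∀ l, f l (g l) (x l) = f l (g l) (x' l)
      · rw [if_pos h, Finset.prod_congr rfl fun l _ => if_pos (h l), Finset.prod_const_one]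
      · rw [if_neg h]
        push_neg at h
        obtain ⟨l, hl⟩ := h
        symm
        apply Finset.prod_eq_zero (Finset.mem_univ l)
        rw [if_neg hl]
    have hfac : ∀ l : L, (∑ i : ι l, (if f l i (x l) = f l i (x' l) then (1:ℝ) else 0))
        = (Fintype.card (ι l) : ℝ) * c l (x l) (x' l) := by
      intro l
      rw [Finset.sum_boole]
      simp only [hc_def]
      field_simp
    calc (∑ g : ∀ l, ι l, ∑ g' : ∀ l, ι l,
        (if g = g' ∧ (∀ l, f l (g l) (x l) = f l (g' l) (x' l)) then (1:ℝ) else 0))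
        = ∑ g : ∀ l, ι l, (if (∀ l, f l (g l) (x l) = f l (g l) (x' l)) then (1:ℝ) else 0) :=
          Finset.sum_congr rfl fun g _ => hcol g
      _ = ∑ g : ∀ l, ι l, ∏ l, (if f l (g l) (x l) = f l (g l) (x' l) then (1:ℝ) else 0) :=
          Finset.sum_congr rfl fun g _ => hprod g
      _ = ∏ l, ∑ i : ι l, (if f l i (x l) = f l i (x' l) then (1:ℝ) else 0) :=
          (Fintype.prod_sum fun l (i : ι l) =>
            if f l i (x l) = f l i (x' l) then (1:ℝ) else 0).symm
      _ = ∏ l, ((Fintype.card (ι l) : ℝ) * c l (x l) (x' l)) :=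
          Finset.prod_congr rfl fun l _ => hfac l
      _ = s * ∏ l, c l (x l) (x' l) := by rw [Finset.prod_mul_distrib, hs_def]
  -- Step B : rewrite the LHS
  have keyB : (∑ g : ∀ l, ι l, ∑ g' : ∀ l, ι l, ∑ x : ∀ l, 𝒳 l, ∑ x' : ∀ l, 𝒳 l,
        s⁻¹ * s⁻¹ * q x * q x' *
          (if g = g' ∧ (∀ l, f l (g l) (x l) = f l (g' l) (x' l)) then (1 : ℝ) else 0))
      = ∑ x : ∀ l, 𝒳 l, ∑ x' : ∀ l, 𝒳 l,
          s⁻¹ * (q x * q x' * ∏ l, c l (x l) (x' l)) := by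
    rw [sum_swap4]
    refine Finset.sum_congr rfl fun x _ => Finset.sum_congr rfl fun x' _ => ?_
    simp only [← Finset.mul_sum]
    rw [keyA x x']
    field_simp
    try ring
  -- the marginal bound
  have h4 : ∀ T : Finset L,
      (∑ x : ∀ l, 𝒳 l, ∑ x' : ∀ l, 𝒳 l,
        (if (∀ i : T, x i.1 = x' i.1) then q x * q x' else 0)) ≤ M T := by
    intro T
    have hx : ∀ x : ∀ l, 𝒳 l,
        (∑ x' : ∀ l, 𝒳 l, (if (∀ i : T, x i.1 = x' i.1) then q x * q x' else 0))
        = q x * marg q T (fun i => x i.1) := by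
      intro x
      unfold marg
      rw [Finset.mul_sum]
      refine Finset.sum_congr rfl fun x' _ => ?_
      rw [mul_ite, mul_zero]
      exact if_congr ⟨fun h i => (h i).symm, fun h i => (h i).symm⟩ rfl rfl
    calc (∑ x : ∀ l, 𝒳 l, ∑ x' : ∀ l, 𝒳 l,
          (if (∀ i : T, x i.1 = x' i.1) then q x * q x' else 0))
        = ∑ x : ∀ l, 𝒳 l, q x * marg q T (fun i => x i.1) :=
          Finset.sum_congr rfl fun x _ => hx x
      _ ≤ ∑ x : ∀ l, 𝒳 l, q x * M T :=
          Finset.sum_le_sum fun x _ =>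
            mul_le_mul_of_nonneg_left (marg_le_sup q T _) (hq0 x)
      _ = M T := by rw [← Finset.sum_mul, hq.2, one_mul]
  -- the difference set
  set D : (∀ l, 𝒳 l) → (∀ l, 𝒳 l) → Finset L :=
    fun x x' => Finset.univ.filter (fun l => x l ≠ x' l) with hD_def
  have h1 : ∀ x x' : ∀ l, 𝒳 l, (∏ l, c l (x l) (x' l)) ≤ w (D x x') := by
    intro x x'
    rw [← Finset.prod_filter_mul_prod_filter_not Finset.univ (fun l => x l ≠ x' l)
      (fun l => c l (x l) (x' l))]
    have hA : (∏ l ∈ Finset.univ.filter (fun l => x l ≠ x' l), c l (x l) (x' l))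
        ≤ w (D x x') := by
      simp only [hw_def, hD_def]
      exact Finset.prod_le_prod (fun l _ => hc0 _ _ _)
        (fun l hl => hcu l _ _ (Finset.mem_filter.mp hl).2)
    have hB : (∏ l ∈ Finset.univ.filter (fun l => ¬ x l ≠ x' l), c l (x l) (x' l)) ≤ 1 :=
      Finset.prod_le_one (fun l _ => hc0 _ _ _) (fun l _ => hc1 _ _ _)
    calc (∏ l ∈ Finset.univ.filter (fun l => x l ≠ x' l), c l (x l) (x' l))
          * (∏ l ∈ Finset.univ.filter (fun l => ¬ x l ≠ x' l), c l (x l) (x' l))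
        ≤ w (D x x') * 1 :=
          mul_le_mul hA hB (Finset.prod_nonneg fun l _ => hc0 _ _ _) (hw _)
      _ = w (D x x') := mul_one _
  have h2 : ∀ x x' : ∀ l, 𝒳 l, q x * q x' * (∏ l, c l (x l) (x' l))
      ≤ ∑ S : Finset L, (if D x x' = S then q x * q x' * w S else 0) := by
    intro x x'
    rw [Finset.sum_ite_eq Finset.univ (D x x') (fun S => q x * q x' * w S)]
    simp only [Finset.mem_univ, ite_true]
    exact mul_le_mul_of_nonneg_left (h1 x x') (mul_nonneg (hq0 x) (hq0 x'))
  have h3 : ∀ S : Finset L,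
      (∑ x : ∀ l, 𝒳 l, ∑ x' : ∀ l, 𝒳 l, (if D x x' = S then q x * q x' * w S else 0))
      ≤ w S * M Sᶜ := by
    intro S
    have hpt : ∀ x x' : ∀ l, 𝒳 l, (if D x x' = S then q x * q x' * w S else 0)
        ≤ w S * (if (∀ i : (Sᶜ : Finset L), x i.1 = x' i.1) then q x * q x' else 0) := by
      intro x x'
      by_cases h : D x x' = S
      · have hagree : ∀ i : (Sᶜ : Finset L), x i.1 = x' i.1 := by
          intro i
          have hi : i.1 ∉ S := (Finset.mem_compl.mp i.2)
          by_contra hne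
          have hmem : i.1 ∈ D x x' := Finset.mem_filter.mpr ⟨Finset.mem_univ _, hne⟩
          rw [h] at hmem
          exact hi hmem
        rw [if_pos h, if_pos hagree]
        exact le_of_eq (by ring)
      · rw [if_neg h]
        exact mul_nonneg (hw S)
          (by split_ifs; exacts [mul_nonneg (hq0 x) (hq0 x'), le_rfl])
    calc (∑ x : ∀ l, 𝒳 l, ∑ x' : ∀ l, 𝒳 l, (if D x x' = S then q x * q x' * w S else 0))
        ≤ ∑ x : ∀ l, 𝒳 l, ∑ x' : ∀ l, 𝒳 l,
            w S * (if (∀ i : (Sᶜ : Finset L), x i.1 = x' i.1) then q x * q x' else 0) :=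
          Finset.sum_le_sum fun x _ => Finset.sum_le_sum fun x' _ => hpt x x'
      _ = w S * ∑ x : ∀ l, 𝒳 l, ∑ x' : ∀ l, 𝒳 l,
            (if (∀ i : (Sᶜ : Finset L), x i.1 = x' i.1) then q x * q x' else 0) := by
          simp only [← Finset.mul_sum]
      _ ≤ w S * M Sᶜ := mul_le_mul_of_nonneg_left (h4 Sᶜ) (hw S)
  have h5 : ∀ S : Finset L,
      w S * M Sᶜ = (2:ℝ) ^ (-(∑ i ∈ S, (r i : ℝ)) - minEnt q Sᶜ) := by
    intro S
    rw [sub_eq_add_neg, Real.rpow_add two_pos, rpow_neg_minEnt q hq Sᶜ]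
    have : (2:ℝ) ^ (-(∑ i ∈ S, (r i : ℝ))) = w S := by
      rw [Real.rpow_neg (by norm_num), ← Nat.cast_sum, Real.rpow_natCast,
        ← Finset.prod_pow_eq_pow_sum, ← Finset.prod_inv_distrib]
    rw [this, hM_def]
  -- core inequality
  have core : (∑ x : ∀ l, 𝒳 l, ∑ x' : ∀ l, 𝒳 l, q x * q x' * ∏ l, c l (x l) (x' l))
      ≤ ∑ S : Finset L, (2:ℝ) ^ (-(∑ i ∈ S, (r i : ℝ)) - minEnt q Sᶜ) := by
    calc (∑ x : ∀ l, 𝒳 l, ∑ x' : ∀ l, 𝒳 l, q x * q x' * ∏ l, c l (x l) (x' l))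
        ≤ ∑ x : ∀ l, 𝒳 l, ∑ x' : ∀ l, 𝒳 l,
            ∑ S : Finset L, (if D x x' = S then q x * q x' * w S else 0) :=
          Finset.sum_le_sum fun x _ => Finset.sum_le_sum fun x' _ => h2 x x'
      _ = ∑ S : Finset L, ∑ x : ∀ l, 𝒳 l, ∑ x' : ∀ l, 𝒳 l,
            (if D x x' = S then q x * q x' * w S else 0) := sum_comm3 _
      _ ≤ ∑ S : Finset L, w S * M Sᶜ := Finset.sum_le_sum fun S _ => h3 S
      _ = ∑ S : Finset L, (2:ℝ) ^ (-(∑ i ∈ S, (r i : ℝ)) - minEnt q Sᶜ) :=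
          Finset.sum_congr rfl fun S _ => h5 S
  calc (∑ g : ∀ l, ι l, ∑ g' : ∀ l, ι l, ∑ x : ∀ l, 𝒳 l, ∑ x' : ∀ l, 𝒳 l,
        s⁻¹ * s⁻¹ * q x * q x' *
          (if g = g' ∧ (∀ l, f l (g l) (x l) = f l (g' l) (x' l)) then (1 : ℝ) else 0))
      = ∑ x : ∀ l, 𝒳 l, ∑ x' : ∀ l, 𝒳 l,
          s⁻¹ * (q x * q x' * ∏ l, c l (x l) (x' l)) := keyB
    _ = s⁻¹ * ∑ x : ∀ l, 𝒳 l, ∑ x' : ∀ l, 𝒳 l,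
          q x * q x' * ∏ l, c l (x l) (x' l) := by simp only [← Finset.mul_sum]
    _ ≤ s⁻¹ * ∑ S : Finset L, (2:ℝ) ^ (-(∑ i ∈ S, (r i : ℝ)) - minEnt q Sᶜ) :=
        mul_le_mul_of_nonneg_left core (inv_nonneg.mpr hs0.le)
end
end
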